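/- arXiv:1210.7844 — 7 statements merged into one kernel-verified Lean document; each statement's English description precedes it below -/
import Mathlib

section
/- (First generalized Kolotilina bound.) Let G be a finite simple graph on n vertices with at least one edge and chromatic number χ. Then for every m with 1 ≤ m ≤ n: Σ_{i=1}^m μ_i ≤ (χ − 1)·Σ_{i=1}^m (μ_i − δ_i + θ_i). -/
open Matrix Finset
open scoped ComplexOrder

private lemma kf_sum_bound {n m : ℕ} (lam t : Fin n → ℝ)
    (ht0 : ∀ i, 0 ≤ t i) (ht1 : ∀ i, t i ≤ 1) (hts : ∑ i, t i = m)
    (S : Finset (Fin n)) (hcard : S.card = m) (hm : 1 ≤ m)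
    (hS : ∀ i ∈ S, ∀ j ∉ S, lam j ≤ lam i) :
    ∑ i, lam i * t i ≤ ∑ i ∈ S, lam i := by
  have hSne : S.Nonempty := Finset.card_pos.mp (by omega)
  obtain ⟨i₀, hi₀S, hi₀min⟩ := S.exists_min_image lam hSne
  have h4 : ∑ i ∈ S, t i + ∑ i ∈ Sᶜ, t i = ∑ i, t i := S.sum_add_sum_compl t
  have h5 : ∑ i ∈ S, ((1:ℝ) - t i) = m - ∑ i ∈ S, t i := by
    rw [Finset.sum_sub_distrib, Finset.sum_const, hcard]; simp
  have h3 : ∑ j ∈ Sᶜ, t j = ∑ i ∈ S, (1 - t i) := by rw [h5]; rw [hts] at h4; linarith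
  have h1 : ∑ j ∈ Sᶜ, lam j * t j ≤ ∑ j ∈ Sᶜ, lam i₀ * t j :=
    Finset.sum_le_sum fun j hj =>
      mul_le_mul_of_nonneg_right (hS i₀ hi₀S j (Finset.mem_compl.mp hj)) (ht0 j)
  have h2 : ∑ i ∈ S, lam i₀ * (1 - t i) ≤ ∑ i ∈ S, lam i * (1 - t i) :=
    Finset.sum_le_sum fun i hi =>
      mul_le_mul_of_nonneg_right (hi₀min i hi) (by linarith [ht1 i])
  have h6 : ∑ i, lam i * t i = ∑ i ∈ S, lam i * t i + ∑ j ∈ Sᶜ, lam j * t j :=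
    (S.sum_add_sum_compl _).symm
  have h7 : ∑ j ∈ Sᶜ, lam i₀ * t j = ∑ i ∈ S, lam i₀ * (1 - t i) := by
    rw [← Finset.mul_sum, ← Finset.mul_sum, h3]
  have h8 : ∑ i ∈ S, lam i * t i + ∑ i ∈ S, lam i * (1 - t i) = ∑ i ∈ S, lam i := by
    rw [← Finset.sum_add_distrib]; apply Finset.sum_congr rfl; intros; ring
  linarith

private lemma psd_diag_re_nonneg {n : ℕ} {Y : Matrix (Fin n) (Fin n) ℂ}
    (hY : Y.PosSemidef) (i : Fin n) : 0 ≤ (Y i i).re := by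
  have h := hY.re_dotProduct_nonneg (Pi.single i 1)
  simpa [dotProduct, Matrix.mulVec, Pi.single_apply, mul_ite, ite_mul,
    Finset.sum_ite_eq, Finset.sum_ite_eq', apply_ite] using h

private lemma trace_conj_eq {n : ℕ} (V : Matrix (Fin n) (Fin n) ℂ) (hV1 : V * Vᴴ = 1)
    (X : Matrix (Fin n) (Fin n) ℂ) : (Vᴴ * X * V).trace = X.trace := by
  calc (Vᴴ * X * V).trace = (V * (Vᴴ * X)).trace := Matrix.trace_mul_comm _ _
  _ = ((V * Vᴴ) * X).trace := by rw [mul_assoc]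
  _ = X.trace := by rw [hV1, one_mul]

private lemma density_conj {n : ℕ} {m : ℕ} {X V : Matrix (Fin n) (Fin n) ℂ}
    (hV1 : V * Vᴴ = 1) (hV2 : Vᴴ * V = 1)
    (hX1 : X.PosSemidef) (hX2 : (1 - X).PosSemidef) (hXt : X.trace = m) :
    (Vᴴ * X * V).PosSemidef ∧ (1 - Vᴴ * X * V).PosSemidef ∧ (Vᴴ * X * V).trace = m := by
  refine ⟨hX1.conjTranspose_mul_mul_same V, ?_, ?_⟩
  · have h : 1 - Vᴴ * X * V = Vᴴ * (1 - X) * V := by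
      rw [Matrix.mul_sub, Matrix.sub_mul, Matrix.mul_one, hV2]
    rw [h]; exact hX2.conjTranspose_mul_mul_same V
  · rw [trace_conj_eq V hV1, hXt]

private lemma kf_trace_bound {n m : ℕ} (V : Matrix (Fin n) (Fin n) ℂ)
    (hV1 : V * Vᴴ = 1) (hV2 : Vᴴ * V = 1) (lam : Fin n → ℝ)
    (X : Matrix (Fin n) (Fin n) ℂ) (hX1 : X.PosSemidef) (hX2 : (1 - X).PosSemidef)
    (hXt : X.trace = m) (S : Finset (Fin n)) (hcard : S.card = m) (hm : 1 ≤ m)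
    (hS : ∀ i ∈ S, ∀ j ∉ S, lam j ≤ lam i) :
    ((V * Matrix.diagonal (fun i => (lam i : ℂ)) * Vᴴ * X).trace).re ≤ ∑ i ∈ S, lam i := by
  set d : Matrix (Fin n) (Fin n) ℂ := Matrix.diagonal (fun i => (lam i : ℂ)) with hd
  set Y := Vᴴ * X * V with hYdef
  obtain ⟨hY1, hY2, hYt⟩ := density_conj hV1 hV2 hX1 hX2 hXt
  have htr : (V * d * Vᴴ * X).trace = (d * Y).trace := by
    calc (V * d * Vᴴ * X).trace = ((V * d) * (Vᴴ * X)).trace := by rw [mul_assoc]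
    _ = ((Vᴴ * X) * (V * d)).trace := Matrix.trace_mul_comm _ _
    _ = ((Vᴴ * X * V) * d).trace := by simp only [mul_assoc]
    _ = (d * Y).trace := Matrix.trace_mul_comm _ _
  have hdiag : (d * Y).trace = ∑ i, (lam i : ℂ) * Y i i := by
    simp [Matrix.trace, Matrix.diag, hd, Matrix.diagonal_mul]
  set t : Fin n → ℝ := fun i => (Y i i).re with ht
  have hre : ((V * d * Vᴴ * X).trace).re = ∑ i, lam i * t i := by
    rw [htr, hdiag, Complex.re_sum]
    exact Finset.sum_congr rfl fun i _ => Complex.re_ofReal_mul _ _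
  rw [hre]
  have ht1 : ∀ i, t i ≤ 1 := by
    intro i
    have h := psd_diag_re_nonneg hY2 i
    simp only [Matrix.sub_apply, Matrix.one_apply_eq, Complex.sub_re, Complex.one_re] at h
    simpa [ht] using by linarith
  have hts : ∑ i, t i = m := by
    have : Y.trace = m := hYt
    have h2 := congrArg Complex.re this
    rw [Matrix.trace] at h2
    simpa [Matrix.diag, Complex.re_sum, ht] using h2
  exact kf_sum_bound lam t (fun i => psd_diag_re_nonneg hY1 i) ht1 hts S hcard hm hS

private lemma real_diagonalization {n : ℕ} (M : Matrix (Fin n) (Fin n) ℝ) (hM : M.IsHermitian) :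
    ∃ V : Matrix (Fin n) (Fin n) ℂ, V * Vᴴ = 1 ∧ Vᴴ * V = 1 ∧
      M.map (fun x => (x : ℂ)) =
        V * Matrix.diagonal (fun i => (hM.eigenvalues i : ℂ)) * Vᴴ := by
  set U : Matrix (Fin n) (Fin n) ℝ := (hM.eigenvectorUnitary : Matrix (Fin n) (Fin n) ℝ) with hU
  have hU1 : U * star U = 1 := Unitary.mul_star_self_of_mem hM.eigenvectorUnitary.2
  have hU2 : star U * U = 1 := Unitary.star_mul_self_of_mem hM.eigenvectorUnitary.2
  set V : Matrix (Fin n) (Fin n) ℂ := U.map (fun x => (x : ℂ)) with hV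
  have hmapconj : ∀ A : Matrix (Fin n) (Fin n) ℝ,
      (A.map (fun x => (x : ℂ)))ᴴ = (star A).map (fun x => (x : ℂ)) := by
    intro A
    rw [Matrix.star_eq_conjTranspose, ← Matrix.conjTranspose_map]
    intro a
    simp [Complex.conj_ofReal]
  have hmapmul : ∀ A B : Matrix (Fin n) (Fin n) ℝ,
      (A * B).map (fun x => (x : ℂ)) = A.map (fun x => (x : ℂ)) * B.map (fun x => (x : ℂ)) := by
    intro A B
    exact Matrix.map_mul (f := Complex.ofRealHom)
  have hmapone : (1 : Matrix (Fin n) (Fin n) ℝ).map (fun x => (x : ℂ)) = 1 :=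
    Matrix.map_one _ Complex.ofReal_zero Complex.ofReal_one
  refine ⟨V, ?_, ?_, ?_⟩
  · rw [hV, hmapconj, ← hmapmul, hU1, hmapone]
  · rw [hV, hmapconj, ← hmapmul, hU2, hmapone]
  · have hst := hM.spectral_theorem
    rw [Unitary.conjStarAlgAut_apply] at hst
    have : M.map (fun x => (x : ℂ)) =
        (U * Matrix.diagonal (RCLike.ofReal ∘ hM.eigenvalues) * star U).map (fun x => (x : ℂ)) := by
      rw [← hst]
    rw [this, hmapmul, hmapmul, ← hmapconj]
    congr 1
    congr 1
    rw [Matrix.diagonal_map Complex.ofReal_zero]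
    congr 1

private lemma F_card {n m : ℕ} (hmn : m ≤ n) :
    (Finset.univ.filter (fun i : Fin n => (i : ℕ) < m)).card = m := by
  have h : Finset.univ.filter (fun i : Fin n => (i : ℕ) < m)
      = (Finset.range m).attachFin (fun x hx => lt_of_lt_of_le (Finset.mem_range.mp hx) hmn) := by
    ext a; simp [Finset.mem_attachFin]
  rw [h, Finset.card_attachFin, Finset.card_range]

private lemma S_props {n m : ℕ} (hmn : m ≤ n) (f lam : Fin n → ℝ) (hf : Antitone f)
    (e : Equiv.Perm (Fin n)) (hfe : f = lam ∘ e) :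
    ∃ S : Finset (Fin n), S.card = m ∧
      (∑ i ∈ S, lam i = ∑ i ∈ Finset.univ.filter (fun i : Fin n => (i : ℕ) < m), f i) ∧
      (∀ i ∈ S, ∀ j ∉ S, lam j ≤ lam i) := by
  set F := Finset.univ.filter (fun i : Fin n => (i : ℕ) < m) with hF
  refine ⟨F.image e, ?_, ?_, ?_⟩
  · rw [Finset.card_image_of_injective _ e.injective, F_card hmn]
  · rw [Finset.sum_image (fun a _ b _ h => e.injective h)]
    exact Finset.sum_congr rfl fun i _ => by rw [hfe]; rfl
  · intro i hi j hj
    obtain ⟨i', hi'F, rfl⟩ := Finset.mem_image.mp hi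
    have hj' : e.symm j ∉ F := fun h => hj (Finset.mem_image.mpr ⟨e.symm j, h, by simp⟩)
    have h1 : lam j = f (e.symm j) := by rw [hfe]; simp
    have h2 : lam (e i') = f i' := by rw [hfe]; rfl
    rw [h1, h2]
    apply hf
    have ha : (i' : ℕ) < m := (Finset.mem_filter.mp hi'F).2
    have hb : ¬((e.symm j : ℕ) < m) := fun h => hj' (Finset.mem_filter.mpr ⟨Finset.mem_univ _, h⟩)
    exact Fin.le_def.mpr (by omega)

private lemma key_upper {n m : ℕ} (hm : 1 ≤ m) (hmn : m ≤ n)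
    (M : Matrix (Fin n) (Fin n) ℝ) (hM : M.IsHermitian)
    (f : Fin n → ℝ) (hf : Antitone f) (e : Equiv.Perm (Fin n)) (hfe : f = hM.eigenvalues ∘ e)
    (X : Matrix (Fin n) (Fin n) ℂ) (hX1 : X.PosSemidef) (hX2 : (1 - X).PosSemidef)
    (hXt : X.trace = m) :
    ((M.map (fun x => (x : ℂ)) * X).trace).re
      ≤ ∑ i ∈ Finset.univ.filter (fun i : Fin n => (i : ℕ) < m), f i := by
  obtain ⟨V, hV1, hV2, hMD⟩ := real_diagonalization M hM
  obtain ⟨S, hcard, hsum, hord⟩ := S_props hmn f hM.eigenvalues hf e hfe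
  rw [hMD, ← hsum]
  exact kf_trace_bound V hV1 hV2 _ X hX1 hX2 hXt S hcard hm hord

private lemma key_exists {n m : ℕ} (hm : 1 ≤ m) (hmn : m ≤ n)
    (M : Matrix (Fin n) (Fin n) ℝ) (hM : M.IsHermitian)
    (f : Fin n → ℝ) (hf : Antitone f) (e : Equiv.Perm (Fin n)) (hfe : f = hM.eigenvalues ∘ e) :
    ∃ X : Matrix (Fin n) (Fin n) ℂ, X.PosSemidef ∧ (1 - X).PosSemidef ∧ X.trace = m ∧
      ((M.map (fun x => (x : ℂ)) * X).trace).re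
        = ∑ i ∈ Finset.univ.filter (fun i : Fin n => (i : ℕ) < m), f i := by
  obtain ⟨V, hV1, hV2, hMD⟩ := real_diagonalization M hM
  obtain ⟨S, hcard, hsum, _⟩ := S_props hmn f hM.eigenvalues hf e hfe
  set g : Fin n → ℂ := fun i => if i ∈ S then 1 else 0 with hg
  have hg0 : ∀ i, (0:ℂ) ≤ g i := by
    intro i; rw [hg]; dsimp only; split <;> simp
  have hg1 : ∀ i, (0:ℂ) ≤ 1 - g i := by
    intro i; rw [hg]; dsimp only; split <;> simp
  refine ⟨V * Matrix.diagonal g * Vᴴ, ?_, ?_, ?_, ?_⟩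
  · exact (Matrix.PosSemidef.diagonal hg0).mul_mul_conjTranspose_same V
  · have h : 1 - V * Matrix.diagonal g * Vᴴ = V * Matrix.diagonal (fun i => 1 - g i) * Vᴴ := by
      have : Matrix.diagonal (fun i => 1 - g i) = 1 - Matrix.diagonal g := by
        rw [← Matrix.diagonal_one, ← Matrix.diagonal_sub]
      rw [this, Matrix.mul_sub, Matrix.sub_mul, Matrix.mul_one, hV1]
    rw [h]
    exact (Matrix.PosSemidef.diagonal hg1).mul_mul_conjTranspose_same V
  · have h : (V * Matrix.diagonal g * Vᴴ).trace = (Matrix.diagonal g).trace := by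
      calc (V * Matrix.diagonal g * Vᴴ).trace
          = (Vᴴ * (V * Matrix.diagonal g)).trace := Matrix.trace_mul_comm _ _
      _ = ((Vᴴ * V) * Matrix.diagonal g).trace := by rw [mul_assoc]
      _ = (Matrix.diagonal g).trace := by rw [hV2, one_mul]
    rw [h, Matrix.trace_diagonal]
    simp [hg, hcard]
  · set dl : Matrix (Fin n) (Fin n) ℂ := Matrix.diagonal (fun i => (hM.eigenvalues i : ℂ)) with hdl
    have hprod : (V * dl * Vᴴ) * (V * Matrix.diagonal g * Vᴴ)
        = V * (dl * Matrix.diagonal g) * Vᴴ := by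
      simp only [mul_assoc]
      rw [← mul_assoc Vᴴ V (Matrix.diagonal g * Vᴴ), hV2, one_mul]
    rw [hMD, hprod]
    have h : (V * (dl * Matrix.diagonal g) * Vᴴ).trace = (dl * Matrix.diagonal g).trace := by
      calc (V * (dl * Matrix.diagonal g) * Vᴴ).trace
          = (Vᴴ * (V * (dl * Matrix.diagonal g))).trace := Matrix.trace_mul_comm _ _
      _ = ((Vᴴ * V) * (dl * Matrix.diagonal g)).trace := by rw [mul_assoc]
      _ = _ := by rw [hV2, one_mul]
    rw [h, hdl, Matrix.diagonal_mul_diagonal, Matrix.trace_diagonal]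
    rw [← hsum]
    rw [hg]
    simp only [mul_ite, mul_one, mul_zero]
    rw [Finset.sum_ite_mem, Finset.univ_inter, Complex.re_sum]
    simp

private lemma rotation_kolotilina {n χ : ℕ} (hχ2 : 2 ≤ χ) (G : SimpleGraph (Fin n)) [DecidableRel G.Adj]
    (c : G.Coloring (Fin χ)) :
    ∃ W : ℕ → Matrix (Fin n) (Fin n) ℂ,
      (∀ j, W j * (W j)ᴴ = 1 ∧ (W j)ᴴ * W j = 1) ∧
      ((χ : ℝ) • G.degMatrix ℝ - G.lapMatrix ℝ).map (fun x => (x : ℂ)) =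
        ∑ j ∈ Finset.Ico 1 χ, W j * (G.lapMatrix ℝ).map (fun x => (x : ℂ)) * (W j)ᴴ := by
  have hχ0 : χ ≠ 0 := by omega
  set ω : ℂ := Complex.exp (2 * Real.pi * Complex.I / χ) with hω_def
  have hω : IsPrimitiveRoot ω χ := Complex.isPrimitiveRoot_exp χ hχ0
  have hω0 : ω ≠ 0 := Complex.exp_ne_zero _
  have hωχ : ω ^ χ = 1 := hω.pow_eq_one
  set W : ℕ → Matrix (Fin n) (Fin n) ℂ :=
    fun j => Matrix.diagonal (fun v => ω ^ (j * (c v : ℕ))) with hW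
  have hstar : ∀ j v, star (ω ^ (j * (c v : ℕ))) = (ω ^ (j * (c v : ℕ)))⁻¹ := by
    intro j v
    have h1 : star ω = ω⁻¹ := by
      rw [Complex.star_def, hω_def, ← Complex.exp_conj, ← Complex.exp_neg]
      congr 1
      simp [map_div₀, Complex.conj_I, map_ofNat]
      ring
    rw [star_pow, h1, inv_pow]
  have hWconj : ∀ j, (W j)ᴴ = Matrix.diagonal (fun v => (ω ^ (j * (c v : ℕ)))⁻¹) := by
    intro j
    rw [hW]
    rw [Matrix.diagonal_conjTranspose]
    have h2 : (star fun v : Fin n => ω ^ (j * (c v : ℕ)))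
        = fun v => (ω ^ (j * (c v : ℕ)))⁻¹ := by
      funext v
      rw [Pi.star_apply]
      exact hstar j v
    rw [h2]
  have hWunit : ∀ j, W j * (W j)ᴴ = 1 ∧ (W j)ᴴ * W j = 1 := by
    intro j
    constructor
    · rw [hWconj, hW, Matrix.diagonal_mul_diagonal, ← Matrix.diagonal_one]
      have h2 : (fun v : Fin n => ω ^ (j * (c v : ℕ)) * (ω ^ (j * (c v : ℕ)))⁻¹)
          = fun _ => (1:ℂ) := by
        funext v; exact mul_inv_cancel₀ (pow_ne_zero _ hω0)
      rw [h2]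
    · rw [hWconj, hW, Matrix.diagonal_mul_diagonal, ← Matrix.diagonal_one]
      have h2 : (fun v : Fin n => (ω ^ (j * (c v : ℕ)))⁻¹ * ω ^ (j * (c v : ℕ)))
          = fun _ => (1:ℂ) := by
        funext v; exact inv_mul_cancel₀ (pow_ne_zero _ hω0)
      rw [h2]
  refine ⟨W, hWunit, ?_⟩
  ext v u
  have hL : ∀ a b : Fin n, (G.lapMatrix ℝ) a b
      = (if a = b then (G.degree a : ℝ) else 0) - (if G.Adj a b then 1 else 0) := by
    intro a b
    simp [SimpleGraph.lapMatrix, SimpleGraph.degMatrix, Matrix.diagonal_apply,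
      SimpleGraph.adjMatrix]
  have hRHS : (∑ j ∈ Finset.Ico 1 χ,
      W j * (G.lapMatrix ℝ).map (fun x => (x : ℂ)) * (W j)ᴴ) v u
      = ∑ j ∈ Finset.Ico 1 χ,
        ω ^ (j * (c v : ℕ)) * ((G.lapMatrix ℝ) v u : ℂ) * (ω ^ (j * (c u : ℕ)))⁻¹ := by
    rw [Matrix.sum_apply]
    refine Finset.sum_congr rfl fun j _ => ?_
    rw [hWconj, hW, Matrix.mul_diagonal, Matrix.diagonal_mul, Matrix.map_apply]
  rw [hRHS]
  rcases eq_or_ne v u with rfl | hvu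
  · -- diagonal entry
    have : ∀ j, ω ^ (j * (c v : ℕ)) * ((G.lapMatrix ℝ) v v : ℂ) * (ω ^ (j * (c v : ℕ)))⁻¹
        = ((G.lapMatrix ℝ) v v : ℂ) := by
      intro j
      rw [mul_comm (ω ^ (j * (c v : ℕ)))
        (((G.lapMatrix ℝ) v v : ℂ)), mul_assoc,
        mul_inv_cancel₀ (pow_ne_zero _ hω0), mul_one]
    rw [Finset.sum_congr rfl fun j _ => this j, Finset.sum_const, Nat.card_Ico,
      nsmul_eq_mul, Nat.cast_sub (show 1 ≤ χ by omega), Nat.cast_one]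
    have hd : (G.degMatrix ℝ) v v = (G.degree v : ℝ) := by
      simp [SimpleGraph.degMatrix, Matrix.diagonal_apply]
    simp only [Matrix.map_apply, Matrix.sub_apply, Matrix.smul_apply, smul_eq_mul,
      hL v v, hd, if_pos rfl, if_neg (G.loopless.irrefl v)]
    push_cast
    ring
  · rcases (em (G.Adj v u)) with hadj | hnadj
    · -- adjacent entry
      have hLvu : (G.lapMatrix ℝ) v u = -1 := by
        rw [hL v u, if_neg hvu, if_pos hadj]; ring
      set a : ℕ := (c v : ℕ) with ha
      set b : ℕ := (c u : ℕ) with hb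
      have hab : a ≠ b := by
        intro h
        exact c.valid hadj (Fin.ext h)
      set ζ : ℂ := ω ^ a * (ω ^ b)⁻¹ with hζ
      have hterm : ∀ j : ℕ, ω ^ (j * a) * (ω ^ (j * b))⁻¹ = ζ ^ j := by
        intro j
        rw [hζ, mul_pow, ← pow_mul, inv_pow, ← pow_mul, mul_comm a j, mul_comm b j]
      have hζχ : ζ ^ χ = 1 := by
        rw [hζ, mul_pow, ← pow_mul, inv_pow, ← pow_mul, mul_comm a χ, mul_comm b χ,
          pow_mul, pow_mul, hωχ, one_pow, one_pow]
        simp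
      have hζ1 : ζ ≠ 1 := by
        intro h
        rw [hζ] at h
        have : ω ^ a = ω ^ b := by
          field_simp at h
          exact h
        exact hab (hω.pow_inj (c v).isLt (c u).isLt this)
      have hgeom : ∑ j ∈ Finset.range χ, ζ ^ j = 0 := by
        rw [geom_sum_eq hζ1, hζχ]
        simp
      have hsplit : ∑ j ∈ Finset.range χ, ζ ^ j
          = ζ ^ 0 + ∑ j ∈ Finset.Ico 1 χ, ζ ^ j := by
        rw [Finset.range_eq_Ico]
        exact Finset.sum_eq_sum_Ico_succ_bot (by omega) _
      have hIco : ∑ j ∈ Finset.Ico 1 χ, ζ ^ j = -1 := by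
        rw [hsplit] at hgeom
        simpa using by linear_combination hgeom
      have hstep : ∀ j : ℕ, ω ^ (j * a) * ((G.lapMatrix ℝ) v u : ℂ) * (ω ^ (j * b))⁻¹
          = -(ζ ^ j) := by
        intro j
        rw [hLvu]
        push_cast
        rw [← hterm j]
        ring
      rw [Finset.sum_congr rfl fun j _ => hstep j]
      rw [Finset.sum_neg_distrib, hIco]
      simp only [Matrix.map_apply, Matrix.sub_apply, Matrix.smul_apply, smul_eq_mul]
      rw [hL v u, if_neg hvu, if_pos hadj]
      have hd : (G.degMatrix ℝ) v u = 0 := by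
        simp [SimpleGraph.degMatrix, Matrix.diagonal_apply_ne _ hvu]
      rw [hd]
      push_cast
      ring
    · -- non-adjacent entry
      have hLvu : (G.lapMatrix ℝ) v u = 0 := by
        rw [hL v u, if_neg hvu, if_neg hnadj]; ring
      have hd : (G.degMatrix ℝ) v u = 0 := by
        simp [SimpleGraph.degMatrix, Matrix.diagonal_apply_ne _ hvu]
      simp only [Matrix.map_apply, Matrix.sub_apply, Matrix.smul_apply, smul_eq_mul]
      rw [hLvu, hd]
      simp [hLvu]

private lemma trace_shuffle {n : ℕ} (Wm L P : Matrix (Fin n) (Fin n) ℂ) :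
    (Wm * L * Wmᴴ * P).trace = (L * (Wmᴴ * P * Wm)).trace := by
  calc (Wm * L * Wmᴴ * P).trace = ((Wm * L) * (Wmᴴ * P)).trace := by simp only [mul_assoc]
  _ = ((Wmᴴ * P) * (Wm * L)).trace := Matrix.trace_mul_comm _ _
  _ = ((Wmᴴ * P * Wm) * L).trace := by simp only [mul_assoc]
  _ = _ := Matrix.trace_mul_comm _ _

/-- **First generalized Kolotilina bound.** For a finite simple graph `G` on `n` vertices with
at least one edge and chromatic number `χ`, for every `1 ≤ m ≤ n`:
`Σ_{i=1}^m μ_i ≤ (χ - 1)·Σ_{i=1}^m (μ_i - δ_i + θ_i)`.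
Here `μ`, `θ`, `δ` are the non-increasing enumerations of the eigenvalues of the adjacency
matrix, the Laplacian `L = D - A` and the signless Laplacian `Q = D + A`, respectively. -/
theorem stmt_10 {n : ℕ} (hn : 0 < n) (G : SimpleGraph (Fin n)) [DecidableRel G.Adj]
    (he : ∃ v w : Fin n, G.Adj v w)
    (χ : ℕ) (hχ : G.chromaticNumber = (χ : ℕ∞))
    (hA : (G.adjMatrix ℝ).IsHermitian)
    (hL : (G.lapMatrix ℝ).IsHermitian)
    (hQ : (G.degMatrix ℝ + G.adjMatrix ℝ).IsHermitian)
    (μ θ δ : Fin n → ℝ)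
    (hμa : Antitone μ) (hμ : ∃ e : Equiv.Perm (Fin n), μ = hA.eigenvalues ∘ e)
    (hθa : Antitone θ) (hθ : ∃ e : Equiv.Perm (Fin n), θ = hL.eigenvalues ∘ e)
    (hδa : Antitone δ) (hδ : ∃ e : Equiv.Perm (Fin n), δ = hQ.eigenvalues ∘ e)
    (m : ℕ) (hm1 : 1 ≤ m) (hmn : m ≤ n) :
    (∑ i ∈ Finset.univ.filter (fun i : Fin n => (i : ℕ) < m), μ i) ≤
      ((χ : ℝ) - 1) *
        (∑ i ∈ Finset.univ.filter (fun i : Fin n => (i : ℕ) < m), (μ i - δ i + θ i)) := by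
  classical
  obtain ⟨eA, hμe⟩ := hμ
  obtain ⟨eL, hθe⟩ := hθ
  obtain ⟨eQ, hδe⟩ := hδ
  have hcol : G.Colorable χ := SimpleGraph.chromaticNumber_le_iff_colorable.mp (le_of_eq hχ)
  obtain ⟨c⟩ := hcol
  obtain ⟨v₀, u₀, hadj⟩ := he
  have hχ2 : 2 ≤ χ := by
    by_contra h
    push_neg at h
    interval_cases χ
    · exact (c v₀).elim0
    · exact c.valid hadj (Subsingleton.elim _ _)
  obtain ⟨W, hWunit, hrot⟩ := rotation_kolotilina hχ2 G c
  obtain ⟨P, hP1, hP2, hPt, hPQ⟩ := key_exists hm1 hmn _ hQ δ hδa eQ hδe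
  set F := Finset.univ.filter (fun i : Fin n => (i : ℕ) < m) with hF
  set Sμ := ∑ i ∈ F, μ i with hSμ
  set Sθ := ∑ i ∈ F, θ i with hSθ
  set Sδ := ∑ i ∈ F, δ i with hSδ
  -- matrix identity over ℝ
  have hid : (((χ:ℝ) - 1) • (G.degMatrix ℝ + G.adjMatrix ℝ))
      = ((χ:ℝ) • G.degMatrix ℝ - G.lapMatrix ℝ) + (((χ:ℝ) - 2) • G.adjMatrix ℝ) := by
    rw [SimpleGraph.lapMatrix]
    ext i j
    simp only [Matrix.smul_apply, Matrix.add_apply, Matrix.sub_apply, smul_eq_mul]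
    ring
  have hmap : ∀ (r : ℝ) (M : Matrix (Fin n) (Fin n) ℝ),
      (r • M).map (fun x => (x : ℂ)) = ((r : ℂ)) • M.map (fun x => (x : ℂ)) := by
    intro r M; ext i j
    simp [Matrix.map_apply, Matrix.smul_apply]
  have hmapadd : ∀ (M N : Matrix (Fin n) (Fin n) ℝ),
      (M + N).map (fun x => (x : ℂ)) = M.map (fun x => (x : ℂ)) + N.map (fun x => (x : ℂ)) := by
    intro M N; ext i j; simp
  -- trace identity from hid
  have htr : (((χ:ℝ) - 1 : ℝ) : ℂ) * (((G.degMatrix ℝ + G.adjMatrix ℝ).map (fun x => (x : ℂ))) * P).trace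
      = ((((χ:ℝ) • G.degMatrix ℝ - G.lapMatrix ℝ).map (fun x => (x : ℂ))) * P).trace
        + (((χ:ℝ) - 2 : ℝ) : ℂ) * (((G.adjMatrix ℝ).map (fun x => (x : ℂ))) * P).trace := by
    have h1 : ((((χ:ℝ) - 1) • (G.degMatrix ℝ + G.adjMatrix ℝ)).map (fun x => (x : ℂ))) * P
        = ((((χ:ℝ) • G.degMatrix ℝ - G.lapMatrix ℝ)
            + (((χ:ℝ) - 2) • G.adjMatrix ℝ)).map (fun x => (x : ℂ))) * P := by rw [hid]
    rw [hmapadd, hmap, hmap] at h1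
    have h2 := congrArg Matrix.trace h1
    rw [Matrix.smul_mul, Matrix.trace_smul, Matrix.add_mul, Matrix.trace_add,
      Matrix.smul_mul, Matrix.trace_smul, smul_eq_mul, smul_eq_mul] at h2
    exact h2
  -- real parts
  have hA_bound : (((G.adjMatrix ℝ).map (fun x => (x : ℂ)) * P).trace).re ≤ Sμ :=
    key_upper hm1 hmn _ hA μ hμa eA hμe P hP1 hP2 hPt
  have hR_bound : ((((χ:ℝ) • G.degMatrix ℝ - G.lapMatrix ℝ).map (fun x => (x : ℂ)) * P).trace).re
      ≤ ((χ:ℝ) - 1) * Sθ := by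
    rw [hrot, Finset.sum_mul, Matrix.trace_sum, Complex.re_sum]
    have hterm : ∀ j ∈ Finset.Ico 1 χ,
        ((W j * (G.lapMatrix ℝ).map (fun x => (x : ℂ)) * (W j)ᴴ * P).trace).re ≤ Sθ := by
      intro j _
      obtain ⟨hWa, hWb⟩ := hWunit j
      obtain ⟨hp1, hp2, hp3⟩ := density_conj hWa hWb hP1 hP2 hPt
      rw [trace_shuffle]
      exact key_upper hm1 hmn _ hL θ hθa eL hθe _ hp1 hp2 hp3
    calc ∑ j ∈ Finset.Ico 1 χ, ((W j * (G.lapMatrix ℝ).map (fun x => (x : ℂ)) * (W j)ᴴ * P).trace).re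
        ≤ ∑ j ∈ Finset.Ico 1 χ, Sθ := Finset.sum_le_sum hterm
    _ = ((χ:ℝ) - 1) * Sθ := by
        rw [Finset.sum_const, Nat.card_Ico, nsmul_eq_mul,
          Nat.cast_sub (show 1 ≤ χ by omega), Nat.cast_one]
  have hmain : ((χ:ℝ) - 1) * Sδ ≤ ((χ:ℝ) - 1) * Sθ + ((χ:ℝ) - 2) * Sμ := by
    have h3 := congrArg Complex.re htr
    rw [Complex.add_re, Complex.re_ofReal_mul, Complex.re_ofReal_mul, hPQ] at h3
    have hnn : (0:ℝ) ≤ (χ:ℝ) - 2 := by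
      have : (2:ℝ) ≤ (χ:ℝ) := by exact_mod_cast hχ2
      linarith
    have h4 := mul_le_mul_of_nonneg_left hA_bound hnn
    linarith
  have hsum_split : ∑ i ∈ F, (μ i - δ i + θ i) = Sμ - Sδ + Sθ := by
    rw [Finset.sum_add_distrib, Finset.sum_sub_distrib]
  rw [hsum_split]
  have expand : ((χ:ℝ) - 1) * (Sμ - Sδ + Sθ)
      = ((χ:ℝ) - 1) * Sμ - ((χ:ℝ) - 1) * Sδ + ((χ:ℝ) - 1) * Sθ := by ring
  have last : ((χ:ℝ) - 1) * Sμ - (((χ:ℝ) - 1) * Sθ + ((χ:ℝ) - 2) * Sμ) + ((χ:ℝ) - 1) * Sθ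
      = Sμ := by ring
  rw [expand]
  linarith [hmain, last]
end

section
/- (Bound of Lima, Oliveira, Abreu and Nikiforov.) Let G be a finite simple graph on n vertices with m ≥ 1 edges and chromatic number χ. Then 2m ≤ (χ − 1)·(2m − n·δ_n); in particular 2m − n·δ_n > 0 and χ ≥ 1 + 2m/(2m − n·δ_n). -/
open Matrix Finset

lemma rayleigh_min {n : ℕ} {Q : Matrix (Fin n) (Fin n) ℝ} (hQ : Q.IsHermitian)
    (c : ℝ) (hc : ∀ i, c ≤ hQ.eigenvalues i) (x : Fin n → ℝ) :
    c * (x ⬝ᵥ x) ≤ x ⬝ᵥ (Q *ᵥ x) := by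
  have hps : Matrix.PosSemidef (Q - c • 1) := by
    have hUU : (hQ.eigenvectorUnitary : Matrix (Fin n) (Fin n) ℝ) *
        star (hQ.eigenvectorUnitary : Matrix (Fin n) (Fin n) ℝ) = 1 :=
      Matrix.mem_unitaryGroup_iff.mp (hQ.eigenvectorUnitary).2
    have key : Q - c • 1 = (hQ.eigenvectorUnitary : Matrix (Fin n) (Fin n) ℝ) *
        (Matrix.diagonal (fun i => hQ.eigenvalues i - c)) *
        (hQ.eigenvectorUnitary : Matrix (Fin n) (Fin n) ℝ)ᴴ := by
      have hd : Matrix.diagonal (fun i => hQ.eigenvalues i - c)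
          = Matrix.diagonal ((RCLike.ofReal : ℝ → ℝ) ∘ hQ.eigenvalues) - c • 1 := by
        rw [RCLike.ofReal_real_eq_id]
        ext i j
        by_cases h : i = j <;> simp [Matrix.diagonal, Matrix.one_apply, h]
      rw [hd, Matrix.mul_sub, Matrix.sub_mul, Matrix.mul_smul, Matrix.mul_one,
        Matrix.smul_mul, ← Matrix.star_eq_conjTranspose, hUU, ← Unitary.conjStarAlgAut_apply (S := ℝ), ← hQ.spectral_theorem]
    rw [key]
    exact (Matrix.posSemidef_diagonal_iff.mpr fun i => sub_nonneg.mpr (hc i)).mul_mul_conjTranspose_same _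
  have h2 := hps.dotProduct_mulVec_nonneg x
  simp only [star_trivial, Matrix.sub_mulVec, Matrix.smul_mulVec, Matrix.one_mulVec,
    dotProduct_sub, dotProduct_smul, smul_eq_mul] at h2
  linarith

lemma quadform {n : ℕ} (G : SimpleGraph (Fin n)) [DecidableRel G.Adj] (x : Fin n → ℝ) :
    x ⬝ᵥ ((G.degMatrix ℝ + G.adjMatrix ℝ) *ᵥ x)
      = ∑ v, ∑ u ∈ G.neighborFinset v, (x v * x v + x v * x u) := by
  simp only [Matrix.add_mulVec, dotProduct_add, SimpleGraph.dotProduct_mulVec_degMatrix]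
  simp only [dotProduct, SimpleGraph.adjMatrix_mulVec_apply]
  rw [← Finset.sum_add_distrib]
  refine Finset.sum_congr rfl fun v _ => ?_
  rw [Finset.sum_add_distrib, Finset.sum_const, SimpleGraph.card_neighborFinset_eq_degree,
    nsmul_eq_mul, Finset.mul_sum]
  ring


/-- **Bound of Lima, Oliveira, Abreu and Nikiforov.** For a finite simple graph `G` on `n`
vertices with `m ≥ 1` edges and chromatic number `χ`:
`2m ≤ (χ - 1)·(2m - n·δ_n)`; in particular `2m - n·δ_n > 0` and
`χ ≥ 1 + 2m/(2m - n·δ_n)`.  Here `δ` is the non-increasing enumeration of the eigenvalues of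
the signless Laplacian `Q = D + A`, and `m` is the number of edges. -/
theorem stmt_12 {n : ℕ} (hn : 0 < n) (G : SimpleGraph (Fin n)) [DecidableRel G.Adj]
    (m : ℕ) (hm : m = G.edgeFinset.card) (hm1 : 1 ≤ m)
    (χ : ℕ) (hχ : G.chromaticNumber = (χ : ℕ∞))
    (hQ : (G.degMatrix ℝ + G.adjMatrix ℝ).IsHermitian)
    (δ : Fin n → ℝ)
    (hδa : Antitone δ) (hδ : ∃ e : Equiv.Perm (Fin n), δ = hQ.eigenvalues ∘ e) :
    2 * (m : ℝ) ≤ ((χ : ℝ) - 1) * (2 * (m : ℝ) - (n : ℝ) * δ ⟨n - 1, by omega⟩) ∧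
    0 < 2 * (m : ℝ) - (n : ℝ) * δ ⟨n - 1, by omega⟩ ∧
    (χ : ℝ) ≥ 1 + 2 * (m : ℝ) / (2 * (m : ℝ) - (n : ℝ) * δ ⟨n - 1, by omega⟩) := by
  obtain ⟨e, hδe⟩ := hδ
  set last : Fin n := ⟨n - 1, by omega⟩ with hlast
  have hmin : ∀ i, δ last ≤ hQ.eigenvalues i := by
    intro i
    have h1 : hQ.eigenvalues i = δ (e.symm i) := by rw [hδe]; simp
    rw [h1]
    refine hδa ?_
    rw [Fin.le_def]
    have := (e.symm i).isLt
    simp only [hlast]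
    omega
  -- coloring
  have hcol : G.Colorable χ := SimpleGraph.chromaticNumber_le_iff_colorable.mp (le_of_eq hχ)
  obtain ⟨c⟩ := hcol
  -- an edge exists
  have hadj : ∃ u v, G.Adj u v := by
    obtain ⟨e0, he0⟩ := Finset.card_pos.mp (by omega : 0 < G.edgeFinset.card)
    revert he0
    refine Sym2.ind (fun u v h => ⟨u, v, SimpleGraph.mem_edgeFinset.mp h⟩) e0
  obtain ⟨u0, v0, huv⟩ := hadj
  have hχ2 : 2 ≤ χ := by
    by_contra h
    have h1 : χ ≤ 1 := by omega
    have h2 := c.valid huv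
    have h3 := (c u0).isLt
    have h4 := (c v0).isLt
    exact h2 (Fin.ext (by omega))
  -- test vectors
  set y : Fin χ → Fin n → ℝ := fun j v => if c v = j then 1 - (χ : ℝ) else 1 with hy
  have hsq : ∀ v, ∑ j : Fin χ, y j v * y j v = (χ : ℝ)^2 - χ := by
    intro v
    have h1 : ∀ j : Fin χ, y j v * y j v
        = 1 + ((if c v = j then (-2 * (χ : ℝ)) else 0) + (if c v = j then (χ : ℝ)^2 else 0)) := by
      intro j; simp only [hy]; split_ifs <;> ring
    rw [Finset.sum_congr rfl fun j _ => h1 j, Finset.sum_add_distrib, Finset.sum_add_distrib,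
      Finset.sum_const, Finset.sum_ite_eq, Finset.sum_ite_eq]
    simp
    ring
  have hcross : ∀ v u : Fin n, c v ≠ c u → ∑ j : Fin χ, y j v * y j u = -(χ : ℝ) := by
    intro v u hne
    have h1 : ∀ j : Fin χ, y j v * y j u
        = 1 + ((if c v = j then (-(χ : ℝ)) else 0) + (if c u = j then (-(χ : ℝ)) else 0)) := by
      intro j; simp only [hy]
      split_ifs with h1 h2
      · exact absurd (h1.trans h2.symm) hne
      all_goals ring
    rw [Finset.sum_congr rfl fun j _ => h1 j, Finset.sum_add_distrib, Finset.sum_add_distrib,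
      Finset.sum_const, Finset.sum_ite_eq, Finset.sum_ite_eq]
    simp
    try ring
  -- sum of quadratic forms
  have hdeg : ∑ v : Fin n, ((G.degree v : ℝ)) = 2 * (m : ℝ) := by
    rw [← Nat.cast_sum]
    rw [SimpleGraph.sum_degrees_eq_twice_card_edges, hm]
    push_cast
    ring
  have hS2 : ∑ j : Fin χ, y j ⬝ᵥ ((G.degMatrix ℝ + G.adjMatrix ℝ) *ᵥ y j)
      = 2 * (m : ℝ) * ((χ : ℝ)^2 - 2 * χ) := by
    have h1 : ∀ j : Fin χ, y j ⬝ᵥ ((G.degMatrix ℝ + G.adjMatrix ℝ) *ᵥ y j)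
        = ∑ v, ∑ u ∈ G.neighborFinset v, (y j v * y j v + y j v * y j u) :=
      fun j => quadform G (y j)
    rw [Finset.sum_congr rfl fun j _ => h1 j, Finset.sum_comm]
    have h2 : ∀ v : Fin n, ∑ j : Fin χ, ∑ u ∈ G.neighborFinset v, (y j v * y j v + y j v * y j u)
        = (G.degree v : ℝ) * ((χ : ℝ)^2 - 2 * χ) := by
      intro v
      rw [Finset.sum_comm]
      have h3 : ∀ u ∈ G.neighborFinset v,
          ∑ j : Fin χ, (y j v * y j v + y j v * y j u) = (χ : ℝ)^2 - 2 * χ := by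
        intro u hu
        have hadj' : G.Adj v u := (SimpleGraph.mem_neighborFinset G v u).mp hu
        rw [Finset.sum_add_distrib, hsq v, hcross v u (c.valid hadj')]
        ring
      rw [Finset.sum_congr rfl h3, Finset.sum_const, SimpleGraph.card_neighborFinset_eq_degree,
        nsmul_eq_mul]
    rw [Finset.sum_congr rfl fun v _ => h2 v, ← Finset.sum_mul, hdeg]
  -- sum of norms
  have hS1 : ∑ j : Fin χ, y j ⬝ᵥ y j = (n : ℝ) * ((χ : ℝ)^2 - χ) := by
    simp only [dotProduct]
    rw [Finset.sum_comm]
    rw [Finset.sum_congr rfl fun v _ => hsq v, Finset.sum_const]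
    simp [nsmul_eq_mul]
  -- bound
  have big : δ last * ((n : ℝ) * ((χ : ℝ)^2 - χ)) ≤ 2 * (m : ℝ) * ((χ : ℝ)^2 - 2 * χ) := by
    rw [← hS1, ← hS2, Finset.mul_sum]
    exact Finset.sum_le_sum fun j _ => rayleigh_min hQ (δ last) hmin (y j)
  -- final arithmetic
  have hC : (2 : ℝ) ≤ (χ : ℝ) := by exact_mod_cast hχ2
  have hM : (1 : ℝ) ≤ (m : ℝ) := by exact_mod_cast hm1
  have g1 : 2 * (m : ℝ) ≤ ((χ : ℝ) - 1) * (2 * (m : ℝ) - (n : ℝ) * δ last) := by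
    nlinarith [big, hC, hM, mul_pos (by linarith : (0:ℝ) < (χ:ℝ)) (by linarith : (0:ℝ) < (χ:ℝ) - 1)]
  have g2 : 0 < 2 * (m : ℝ) - (n : ℝ) * δ last := by nlinarith [g1, hC, hM]
  refine ⟨g1, g2, ?_⟩
  have h4 : 2 * (m : ℝ) / (2 * (m : ℝ) - (n : ℝ) * δ last) ≤ (χ : ℝ) - 1 :=
    (div_le_iff₀ g2).mpr g1
  linarith
end

section
/- (Normalized Hoffman bound.) Let G be a finite simple graph on n vertices with no isolated vertices, at least one edge, and chromatic number χ. Then μ_n* < 0 and 1 ≤ (χ − 1)·(−μ_n*); equivalently, χ ≥ 1 + 1/(−μ_n*). -/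
open Finset Matrix

section aux

variable {n : ℕ}

/-- dot product distributes over sums on the left. -/
private lemma dot_sum_left {m : ℕ} (f : Fin m → Fin n → ℝ) (x : Fin n → ℝ) :
    (∑ i, f i) ⬝ᵥ x = ∑ i, f i ⬝ᵥ x := by
  simp only [dotProduct, Finset.sum_apply, Finset.sum_mul]
  exact Finset.sum_comm

private lemma dot_sum_right {m : ℕ} (x : Fin n → ℝ) (f : Fin m → Fin n → ℝ) :
    x ⬝ᵥ (∑ i, f i) = ∑ i, x ⬝ᵥ f i := by
  simp only [dotProduct, Finset.sum_apply, Finset.mul_sum]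
  exact Finset.sum_comm

/-- Shifting a Hermitian real matrix by (a lower bound of) its smallest eigenvalue
gives a positive semidefinite matrix. -/
private lemma psd_shift {A : Matrix (Fin n) (Fin n) ℝ} (hA : A.IsHermitian)
    {β : ℝ} (hβ : ∀ i, β ≤ hA.eigenvalues i) :
    (A - β • (1 : Matrix (Fin n) (Fin n) ℝ)).PosSemidef := by
  classical
  set U : Matrix (Fin n) (Fin n) ℝ := (hA.eigenvectorUnitary : Matrix (Fin n) (Fin n) ℝ)
  have hU : U * star U = 1 := (Matrix.mem_unitaryGroup_iff).mp hA.eigenvectorUnitary.2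
  have hdiag : Matrix.diagonal (RCLike.ofReal ∘ hA.eigenvalues)
      = Matrix.diagonal (fun i => hA.eigenvalues i - β) + β • (1 : Matrix (Fin n) (Fin n) ℝ) := by
    rw [Matrix.smul_one_eq_diagonal, Matrix.diagonal_add]
    funext i
    simp
  have key : A - β • (1 : Matrix (Fin n) (Fin n) ℝ)
      = U * Matrix.diagonal (fun i => hA.eigenvalues i - β) * Uᴴ := by
    conv_lhs => rw [hA.spectral_theorem, hdiag]
    rw [Unitary.conjStarAlgAut_apply]
    rw [Matrix.mul_add, Matrix.add_mul]
    have h2 : U * (β • (1 : Matrix (Fin n) (Fin n) ℝ)) * star U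
        = β • (1 : Matrix (Fin n) (Fin n) ℝ) := by
      rw [Matrix.mul_smul, Matrix.mul_one, Matrix.smul_mul, hU]
    rw [h2]
    simp [Matrix.star_eq_conjTranspose]
    rfl
  rw [key]
  exact (Matrix.posSemidef_diagonal_iff.mpr fun i => sub_nonneg.mpr (hβ i)).mul_mul_conjTranspose_same U

/-- Cauchy–Schwarz for the quadratic form of a PSD real matrix. -/
private lemma psd_cauchySchwarz {B : Matrix (Fin n) (Fin n) ℝ} (hB : B.PosSemidef)
    (a b : Fin n → ℝ) :
    a ⬝ᵥ (B *ᵥ b) ≤ Real.sqrt (a ⬝ᵥ (B *ᵥ a)) * Real.sqrt (b ⬝ᵥ (B *ᵥ b)) := by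
  have hnn : ∀ z : Fin n → ℝ, 0 ≤ z ⬝ᵥ (B *ᵥ z) := by
    intro z
    have := hB.dotProduct_mulVec_nonneg z
    simpa using this
  have hsymm : ∀ x y : Fin n → ℝ, x ⬝ᵥ (B *ᵥ y) = y ⬝ᵥ (B *ᵥ x) := by
    intro x y
    have hB' : ∀ u v, B u v = B v u := by
      intro u v
      have := congrFun (congrFun hB.1 u) v
      simpa [Matrix.conjTranspose_apply] using this.symm
    have hdd : ∀ x y : Fin n → ℝ, x ⬝ᵥ (B *ᵥ y) = ∑ u, ∑ v, x u * B u v * y v := by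
      intro x y
      simp only [dotProduct, mulVec, Finset.mul_sum]
      exact Finset.sum_congr rfl fun u _ => Finset.sum_congr rfl fun v _ => by ring
    rw [hdd, hdd, Finset.sum_comm]
    exact Finset.sum_congr rfl fun u _ => Finset.sum_congr rfl fun v _ => by rw [hB' v u]; ring
  set qaa := a ⬝ᵥ (B *ᵥ a)
  set qbb := b ⬝ᵥ (B *ᵥ b)
  set qab := a ⬝ᵥ (B *ᵥ b)
  have hquad : ∀ t : ℝ, 0 ≤ qbb * (t * t) + (2 * qab) * t + qaa := by
    intro t
    have h := hnn (a + t • b)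
    have hexp : (a + t • b) ⬝ᵥ (B *ᵥ (a + t • b))
        = qbb * (t * t) + (2 * qab) * t + qaa := by
      rw [Matrix.mulVec_add, Matrix.mulVec_smul, dotProduct_add, add_dotProduct,
        add_dotProduct, dotProduct_smul, smul_dotProduct, smul_dotProduct, dotProduct_smul]
      have := hsymm b a
      simp only [smul_eq_mul]
      rw [this]
      ring
    rw [hexp] at h
    exact h
  have hdisc := discrim_le_zero hquad
  rw [discrim] at hdisc
  have hsq : qab ^ 2 ≤ qaa * qbb := by nlinarith
  calc qab ≤ |qab| := le_abs_self _
    _ = Real.sqrt (qab ^ 2) := (Real.sqrt_sq_eq_abs _).symm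
    _ ≤ Real.sqrt (qaa * qbb) := Real.sqrt_le_sqrt hsq
    _ = Real.sqrt qaa * Real.sqrt qbb := Real.sqrt_mul (hnn a) _

end aux

/-- **Normalized Hoffman bound.** Let `G` be a finite simple graph on `n` vertices with no
isolated vertices, at least one edge, and chromatic number `χ`.  Let
`𝒜 = D^{-1/2} A D^{-1/2}` be the normalized adjacency matrix, with non-increasing
eigenvalue enumeration `μ*`.  Then `μ*_n < 0` and `1 ≤ (χ - 1)·(-μ*_n)`; equivalently
`χ ≥ 1 + 1/(-μ*_n)`. -/
theorem stmt_13 {n : ℕ} (hn : 0 < n) (G : SimpleGraph (Fin n)) [DecidableRel G.Adj]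
    (hdeg : ∀ v : Fin n, 0 < G.degree v)
    (he : ∃ v w : Fin n, G.Adj v w)
    (χ : ℕ) (hχ : G.chromaticNumber = (χ : ℕ∞))
    (N : Matrix (Fin n) (Fin n) ℝ)
    (hNdef : N = Matrix.diagonal (fun v => (Real.sqrt (G.degree v))⁻¹) * G.adjMatrix ℝ *
      Matrix.diagonal (fun v => (Real.sqrt (G.degree v))⁻¹))
    (hN : N.IsHermitian)
    (μ : Fin n → ℝ) (hμa : Antitone μ)
    (hμ : ∃ e : Equiv.Perm (Fin n), μ = hN.eigenvalues ∘ e) :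
    μ ⟨n - 1, by omega⟩ < 0 ∧
    1 ≤ ((χ : ℝ) - 1) * (-μ ⟨n - 1, by omega⟩) ∧
    (χ : ℝ) ≥ 1 + 1 / (-μ ⟨n - 1, by omega⟩) := by
  classical
  obtain ⟨e, he'⟩ := hμ
  obtain ⟨c⟩ : G.Colorable χ := SimpleGraph.chromaticNumber_le_iff_colorable.mp hχ.le
  set β : ℝ := μ ⟨n - 1, by omega⟩ with hβdef
  -- β is a lower bound on the eigenvalues
  have hmin : ∀ i, β ≤ hN.eigenvalues i := by
    intro i
    have h1 : hN.eigenvalues i = μ (e.symm i) := by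
      rw [he']; simp
    rw [h1]
    apply hμa
    rw [Fin.le_def]
    have := (e.symm i).isLt
    simp only
    omega
  -- the vector of square roots of degrees
  set w : Fin n → ℝ := fun v => Real.sqrt (G.degree v) with hwdef
  have hwpos : ∀ v, 0 < w v := by
    intro v
    apply Real.sqrt_pos.mpr
    exact_mod_cast hdeg v
  have hwsq : ∀ v, w v * w v = (G.degree v : ℝ) := by
    intro v
    exact Real.mul_self_sqrt (by positivity)
  -- entries of N
  have hNe : ∀ u v, N u v = (w u)⁻¹ * (if G.Adj u v then (1:ℝ) else 0) * (w v)⁻¹ := by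
    intro u v
    rw [hNdef, Matrix.mul_diagonal, Matrix.diagonal_mul, SimpleGraph.adjMatrix_apply]
  -- w is an eigenvector with eigenvalue 1
  have hNw : N *ᵥ w = w := by
    funext u
    show ∑ v, N u v * w v = w u
    have h1 : ∀ v, N u v * w v = (w u)⁻¹ * (if G.Adj u v then (1:ℝ) else 0) := by
      intro v
      rw [hNe]
      have : (w u)⁻¹ * (if G.Adj u v then (1:ℝ) else 0) * (w v)⁻¹ * w v
          = (w u)⁻¹ * (if G.Adj u v then (1:ℝ) else 0) * ((w v)⁻¹ * w v) := by ring
      rw [this, inv_mul_cancel₀ (hwpos v).ne', mul_one]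
    rw [Finset.sum_congr rfl (fun v _ => h1 v), ← Finset.mul_sum]
    have h2 : ∑ v, (if G.Adj u v then (1:ℝ) else 0) = (G.degree u : ℝ) := by
      rw [Finset.sum_boole]
      congr 1
      rw [SimpleGraph.degree, SimpleGraph.neighborFinset_eq_filter]
    rw [h2, ← hwsq u, ← mul_assoc, inv_mul_cancel₀ (hwpos u).ne', one_mul]
  -- color class pieces of w
  set W : Fin χ → Fin n → ℝ := fun i v => if c v = i then w v else 0 with hWdef
  have hWsum : ∑ i, W i = w := by
    funext v
    rw [Finset.sum_apply]
    simp [hWdef, Finset.sum_ite_eq]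
  -- independent sets: the form of N vanishes on each piece
  have hPWW : ∀ i, W i ⬝ᵥ (N *ᵥ W i) = 0 := by
    intro i
    apply Finset.sum_eq_zero
    intro u _
    show W i u * (N *ᵥ W i) u = 0
    by_cases hu : c u = i
    · have : (N *ᵥ W i) u = 0 := by
        show ∑ v, N u v * W i v = 0
        apply Finset.sum_eq_zero
        intro v _
        show N u v * W i v = 0
        by_cases hv : c v = i
        · have hadj : ¬ G.Adj u v := by
            intro hadj
            exact (c.valid hadj) (hu.trans hv.symm)
          rw [hNe]
          simp [hadj]
        · simp [hWdef, hv]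
      rw [this, mul_zero]
    · have : W i u = 0 := by simp [hWdef, hu]
      rw [this, zero_mul]
  -- the shifted matrix
  set B : Matrix (Fin n) (Fin n) ℝ := N - β • 1 with hBdef
  have hBpsd : B.PosSemidef := psd_shift hN hmin
  set q : (Fin n → ℝ) → (Fin n → ℝ) → ℝ := fun a b => a ⬝ᵥ (B *ᵥ b) with hqdef
  have hqz : ∀ z, 0 ≤ q z z := by
    intro z
    have := hBpsd.dotProduct_mulVec_nonneg z
    simpa using this
  have hqsplit : ∀ a b : Fin n → ℝ, q a b = a ⬝ᵥ (N *ᵥ b) - β * (a ⬝ᵥ b) := by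
    intro a b
    show a ⬝ᵥ ((N - β • 1) *ᵥ b) = _
    rw [Matrix.sub_mulVec, Matrix.smul_mulVec, Matrix.one_mulVec, dotProduct_sub,
      dotProduct_smul, smul_eq_mul]
  set t : Fin χ → ℝ := fun i => W i ⬝ᵥ W i with htdef
  have htnn : ∀ i, 0 ≤ t i := by
    intro i
    have : t i = ∑ v, W i v * W i v := rfl
    rw [this]
    exact Finset.sum_nonneg fun v _ => mul_self_nonneg _
  have hqWW : ∀ i, q (W i) (W i) = -β * t i := by
    intro i
    rw [hqsplit, hPWW]
    ring
  set S : ℝ := w ⬝ᵥ w with hSdef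
  haveI : Nonempty (Fin n) := ⟨⟨0, hn⟩⟩
  have hSpos : 0 < S := by
    have : S = ∑ v, w v * w v := rfl
    rw [this]
    apply Finset.sum_pos
    · intro v _
      exact mul_pos (hwpos v) (hwpos v)
    · exact Finset.univ_nonempty
  have hqww : q w w = (1 - β) * S := by
    rw [hqsplit, hNw]
    ring
  -- sum of the t i is S
  have htS : ∑ i, t i = S := by
    have h1 : ∀ i, t i = ∑ v, (if c v = i then w v * w v else 0) := by
      intro i
      apply Finset.sum_congr rfl
      intro v _
      by_cases hv : c v = i <;> simp [hWdef, hv]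
    rw [Finset.sum_congr rfl (fun i _ => h1 i), Finset.sum_comm]
    apply Finset.sum_congr rfl
    intro v _
    simp [Finset.sum_ite_eq]
  -- -β is nonnegative
  have hβnn : 0 ≤ -β := by
    obtain ⟨v0⟩ : Nonempty (Fin n) := ⟨⟨0, hn⟩⟩
    have ht0 : 0 < t (c v0) := by
      have hle : w v0 * w v0 ≤ t (c v0) := by
        have ht : t (c v0) = ∑ v, W (c v0) v * W (c v0) v := rfl
        have h1 : w v0 * w v0 = W (c v0) v0 * W (c v0) v0 := by simp [hWdef]
        rw [ht, h1]
        exact Finset.single_le_sum (fun v _ => mul_self_nonneg (W (c v0) v)) (Finset.mem_univ v0)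
      exact lt_of_lt_of_le (mul_pos (hwpos v0) (hwpos v0)) hle
    have h0 := hqz (W (c v0))
    rw [hqWW] at h0
    nlinarith
  -- expansion of q w w
  have hexp : q w w = ∑ i, ∑ j, q (W i) (W j) := by
    conv_lhs => rw [← hWsum]
    show (∑ i, W i) ⬝ᵥ (B *ᵥ (∑ j, W j)) = _
    have hBsum : B *ᵥ (∑ j, W j) = ∑ j, B *ᵥ W j := by
      have h := map_sum B.mulVecLin W Finset.univ
      simp only [Matrix.mulVecLin_apply] at h
      exact h
    rw [hBsum, dot_sum_left]
    apply Finset.sum_congr rfl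
    intro i _
    exact dot_sum_right _ _
  -- key inequality
  have hkey : (1 - β) * S ≤ -β * (χ * S) := by
    have h1 : q w w ≤ (∑ i, Real.sqrt (q (W i) (W i))) ^ 2 := by
      rw [hexp]
      have h2 : ∀ i ∈ Finset.univ, ∑ j, q (W i) (W j)
          ≤ ∑ j, Real.sqrt (q (W i) (W i)) * Real.sqrt (q (W j) (W j)) := by
        intro i _
        apply Finset.sum_le_sum
        intro j _
        exact psd_cauchySchwarz hBpsd (W i) (W j)
      calc ∑ i, ∑ j, q (W i) (W j)
          ≤ ∑ i, ∑ j, Real.sqrt (q (W i) (W i)) * Real.sqrt (q (W j) (W j)) :=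
            Finset.sum_le_sum h2
        _ = (∑ i, Real.sqrt (q (W i) (W i))) ^ 2 := by
            rw [sq, Finset.sum_mul_sum]
    have h3 : (∑ i, Real.sqrt (q (W i) (W i))) ^ 2 = (-β) * (∑ i, Real.sqrt (t i)) ^ 2 := by
      have h4 : ∀ i, Real.sqrt (q (W i) (W i)) = Real.sqrt (-β) * Real.sqrt (t i) := by
        intro i
        rw [hqWW, Real.sqrt_mul hβnn]
      rw [Finset.sum_congr rfl (fun i _ => h4 i), ← Finset.mul_sum, mul_pow,
        Real.sq_sqrt hβnn]
    have h5 : (∑ i, Real.sqrt (t i)) ^ 2 ≤ (χ : ℝ) * S := by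
      have hcs := Finset.sum_mul_sq_le_sq_mul_sq Finset.univ (fun _ : Fin χ => (1:ℝ))
        (fun i => Real.sqrt (t i))
      simp only [one_mul, one_pow] at hcs
      have h6 : ∑ i : Fin χ, Real.sqrt (t i) ^ 2 = S := by
        rw [← htS]
        apply Finset.sum_congr rfl
        intro i _
        exact Real.sq_sqrt (htnn i)
      rw [h6] at hcs
      simpa [Finset.card_univ] using hcs
    calc (1 - β) * S = q w w := hqww.symm
      _ ≤ (∑ i, Real.sqrt (q (W i) (W i))) ^ 2 := h1
      _ = (-β) * (∑ i, Real.sqrt (t i)) ^ 2 := h3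
      _ ≤ (-β) * ((χ : ℝ) * S) := mul_le_mul_of_nonneg_left h5 hβnn
  have hmain : 1 ≤ ((χ : ℝ) - 1) * (-β) := by
    have h7 : 1 - β ≤ -β * χ := by
      apply le_of_mul_le_mul_right _ hSpos
      nlinarith [hkey]
    nlinarith
  have hβneg : β < 0 := by
    rcases lt_or_eq_of_le hβnn with h | h
    · linarith
    · exfalso
      rw [← h] at hmain
      simp at hmain
      linarith
  refine ⟨hβneg, hmain, ?_⟩
  rw [ge_iff_le]
  have hβpos : 0 < -β := by linarith
  have : 1 / (-β) ≤ (χ : ℝ) - 1 := by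
    rw [div_le_iff₀ hβpos]
    linarith [hmain]
  linarith
end

section
/- (Generalized normalized Hoffman bound.) Let G be a finite simple graph on n vertices with no isolated vertices, at least one edge, and chromatic number χ. Then for every m with 1 ≤ m ≤ n: Σ_{i=1}^m μ_i* ≤ (χ − 1)·Σ_{i=1}^m (−μ*_{n+1−i}). -/
open Matrix Finset

lemma card_filt {n m : ℕ} (hmn : m ≤ n) :
    (univ.filter (fun i : Fin n => (i : ℕ) < m)).card = m := by
  have : univ.filter (fun i : Fin n => (i : ℕ) < m)
      = (Finset.range m).attachFin (fun x hx => lt_of_lt_of_le (Finset.mem_range.mp hx) hmn) := by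
    ext i; simp [Finset.mem_attachFin]
  rw [this, Finset.card_attachFin, Finset.card_range]

lemma thresh {n m : ℕ} (hm1 : 1 ≤ m) (hmn : m ≤ n) (ν : Fin n → ℝ) (hν : Antitone ν)
    (d : Fin n → ℝ) (hd0 : ∀ i, 0 ≤ d i) (hd1 : ∀ i, d i ≤ 1)
    (hsum : ∑ i, d i = m) :
    ∑ i, d i * ν i ≤ ∑ i ∈ univ.filter (fun i : Fin n => (i : ℕ) < m), ν i := by
  have hmn' : m - 1 < n := by omega
  set t := ν ⟨m - 1, hmn'⟩ with ht
  set s := univ.filter (fun i : Fin n => (i : ℕ) < m) with hs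
  have hsplit : ∑ i, d i * ν i = ∑ i ∈ s, d i * ν i + ∑ i ∈ sᶜ, d i * ν i :=
    (Finset.sum_add_sum_compl s _).symm
  have h1 : ∀ i ∈ s, d i * ν i - ν i ≤ (d i - 1) * t := by
    intro i hi
    have hit : t ≤ ν i := by
      apply hν
      simp only [hs, Finset.mem_filter] at hi
      simp only [Fin.le_def]
      omega
    nlinarith [hd1 i]
  have h2 : ∀ i ∈ sᶜ, d i * ν i ≤ d i * t := by
    intro i hi
    have hit : ν i ≤ t := by
      apply hν
      simp only [hs, Finset.mem_compl, Finset.mem_filter, Finset.mem_univ, true_and, not_lt] at hi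
      simp only [Fin.le_def]
      omega
    nlinarith [hd0 i]
  have hcard : (s.card : ℝ) = m := by rw [hs, card_filt hmn]
  have hsum' : ∑ i ∈ s, d i + ∑ i ∈ sᶜ, d i = m := by
    rw [Finset.sum_add_sum_compl]; exact hsum
  have B1 : ∑ i ∈ s, (d i * ν i - ν i) ≤ ∑ i ∈ s, (d i - 1) * t := Finset.sum_le_sum h1
  have B2 : ∑ i ∈ sᶜ, d i * ν i ≤ ∑ i ∈ sᶜ, d i * t := Finset.sum_le_sum h2
  have key : ∑ i ∈ s, (d i - 1) * t + ∑ i ∈ sᶜ, d i * t = 0 := by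
    rw [← Finset.sum_mul, ← Finset.sum_mul, Finset.sum_sub_distrib]
    simp only [Finset.sum_const, nsmul_eq_mul, mul_one]
    have h0 : (∑ i ∈ s, d i - (s.card : ℝ)) + ∑ i ∈ sᶜ, d i = 0 := by
      rw [hcard]; linarith
    calc (∑ i ∈ s, d i - (s.card : ℝ)) * t + (∑ i ∈ sᶜ, d i) * t
        = ((∑ i ∈ s, d i - (s.card : ℝ)) + ∑ i ∈ sᶜ, d i) * t := by ring
      _ = 0 := by rw [h0, zero_mul]
  rw [Finset.sum_sub_distrib] at B1
  rw [hsplit]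
  linarith
lemma kyfan {n m : ℕ} (hm1 : 1 ≤ m) (hmn : m ≤ n)
    (W : Matrix (Fin n) (Fin n) ℂ) (hW : W * Wᴴ = 1) (hW' : Wᴴ * W = 1)
    (g : Fin n → ℝ)
    (Q : Matrix (Fin n) (Fin n) ℂ) (hQH : Qᴴ = Q) (hQ2 : Q * Q = Q) (hQt : Q.trace = (m : ℂ))
    (ν : Fin n → ℝ) (hν : Antitone ν) (σ : Equiv.Perm (Fin n)) (hσ : ∀ i, g i = ν (σ i)) :
    (Q * (W * Matrix.diagonal (fun i => (g i : ℂ)) * Wᴴ)).trace.re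
      ≤ ∑ i ∈ univ.filter (fun i : Fin n => (i : ℕ) < m), ν i := by
  set D : Matrix (Fin n) (Fin n) ℂ := Matrix.diagonal (fun i => (g i : ℂ)) with hD
  set Q' : Matrix (Fin n) (Fin n) ℂ := Wᴴ * Q * W with hQ'
  have htr : (Q * (W * D * Wᴴ)).trace = (Q' * D).trace := by
    rw [hQ', ← mul_assoc, ← mul_assoc, Matrix.trace_mul_comm, ← mul_assoc, ← mul_assoc]
  have hQ'H : Q'ᴴ = Q' := by
    rw [hQ']
    simp [conjTranspose_mul, hQH, mul_assoc]
  have hQ'2 : Q' * Q' = Q' := by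
    rw [hQ']
    calc Wᴴ * Q * W * (Wᴴ * Q * W) = Wᴴ * Q * (W * Wᴴ) * Q * W := by
          simp only [mul_assoc]
      _ = Wᴴ * Q * W := by rw [hW]; simp only [mul_one, mul_assoc, hQ2]
  have hQ't : Q'.trace = (m : ℂ) := by
    rw [hQ', Matrix.trace_mul_cycle, hW, one_mul, hQt]
  set d : Fin n → ℝ := fun i => (Q' i i).re with hd
  have hreal : ∀ i, Q' i i = ((d i : ℝ) : ℂ) ∧ 0 ≤ d i ∧ d i ≤ 1 := by
    intro i
    have hsym : ∀ a b, Q' a b = star (Q' b a) := by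
      intro a b
      conv_lhs => rw [← hQ'H]
      exact Matrix.conjTranspose_apply Q' b a
    have h1 : Q' i i = ∑ j, Q' i j * star (Q' i j) := by
      conv_lhs => rw [← hQ'2]
      rw [Matrix.mul_apply]
      exact Finset.sum_congr rfl fun j _ => by rw [← hsym j i]
    have h2 : Q' i i = ((∑ j, Complex.normSq (Q' i j) : ℝ) : ℂ) := by
      rw [h1]; push_cast
      congr 1; ext j
      exact (Complex.mul_conj _)
    have hrei : (Q' i i).re = ∑ j, Complex.normSq (Q' i j) := by rw [h2]; simp
    have h0 : 0 ≤ d i := by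
      rw [hd]; simp only [hrei]
      exact Finset.sum_nonneg fun j _ => Complex.normSq_nonneg _
    have hsq : Complex.normSq (Q' i i) ≤ d i := by
      rw [hd]; simp only [hrei]
      exact Finset.single_le_sum (fun j _ => Complex.normSq_nonneg _) (Finset.mem_univ i)
    have hiim : (Q' i i).im = 0 := by rw [h2]; simp
    have hns : Complex.normSq (Q' i i) = d i ^ 2 := by
      rw [Complex.normSq_apply, hiim]; ring
    refine ⟨?_, h0, by nlinarith⟩
    rw [hd]
    exact Complex.ext rfl (by simpa using hiim)
  have hsumd : ∑ i, d i = m := by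
    have := congrArg Complex.re hQ't
    rw [Matrix.trace] at this
    simpa [Matrix.diag, Complex.re_sum, d] using this
  have htr2 : (Q' * D).trace.re = ∑ i, d i * g i := by
    rw [Matrix.trace]
    have : ∀ i, (Q' * D).diag i = ((d i : ℝ) : ℂ) * ((g i : ℝ) : ℂ) := by
      intro i
      rw [Matrix.diag, Matrix.mul_apply]
      rw [hD]
      simp [Matrix.diagonal_apply, (hreal i).1]
    rw [Finset.sum_congr rfl fun i _ => this i]
    push_cast
    simp
  rw [htr, htr2]
  have hre : ∑ i, d i * g i = ∑ j, d (σ.symm j) * ν j := by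
    rw [← Equiv.sum_comp σ (fun j => d (σ.symm j) * ν j)]
    simp [hσ]
  rw [hre]
  exact thresh hm1 hmn ν hν (fun j => d (σ.symm j)) (fun j => ((hreal _).2).1)
    (fun j => ((hreal _).2).2) (by rw [Equiv.sum_comp σ.symm d]; exact hsumd)
lemma sandwich {n : ℕ} (W : Matrix (Fin n) (Fin n) ℂ) (hW2 : Wᴴ * W = 1) (a b : Fin n → ℂ) :
    (W * Matrix.diagonal a * Wᴴ) * (W * Matrix.diagonal b * Wᴴ)
      = W * Matrix.diagonal (fun i => a i * b i) * Wᴴ := by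
  rw [mul_assoc (W * Matrix.diagonal a) Wᴴ (W * Matrix.diagonal b * Wᴴ),
    ← mul_assoc Wᴴ (W * Matrix.diagonal b) Wᴴ, ← mul_assoc Wᴴ W (Matrix.diagonal b), hW2, one_mul,
    ← mul_assoc, mul_assoc W (Matrix.diagonal a) (Matrix.diagonal b),
    Matrix.diagonal_mul_diagonal]


lemma trace_sandwich {n : ℕ} (W : Matrix (Fin n) (Fin n) ℂ) (hW2 : Wᴴ * W = 1) (a : Fin n → ℂ) :
    (W * Matrix.diagonal a * Wᴴ).trace = ∑ i, a i := by
  rw [Matrix.trace_mul_cycle, hW2, one_mul, Matrix.trace_diagonal]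



/-- **Generalized normalized Hoffman bound.** Let `G` be a finite simple graph on `n` vertices
with no isolated vertices, at least one edge, and chromatic number `χ`.  Let
`𝒜 = D^{-1/2} A D^{-1/2}` be the normalized adjacency matrix, with non-increasing
eigenvalue enumeration `μ*`.  Then for every `1 ≤ m ≤ n`:
`Σ_{i=1}^m μ*_i ≤ (χ - 1)·Σ_{i=1}^m (-μ*_{n+1-i})`, where the top `m` eigenvalues are those
with index `< m` and the bottom `m` are those with index `≥ n - m`. -/
theorem stmt_14 {n : ℕ} (hn : 0 < n) (G : SimpleGraph (Fin n)) [DecidableRel G.Adj]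
    (hdeg : ∀ v : Fin n, 0 < G.degree v)
    (he : ∃ v w : Fin n, G.Adj v w)
    (χ : ℕ) (hχ : G.chromaticNumber = (χ : ℕ∞))
    (N : Matrix (Fin n) (Fin n) ℝ)
    (hNdef : N = Matrix.diagonal (fun v => (Real.sqrt (G.degree v))⁻¹) * G.adjMatrix ℝ *
      Matrix.diagonal (fun v => (Real.sqrt (G.degree v))⁻¹))
    (hN : N.IsHermitian)
    (μ : Fin n → ℝ) (hμa : Antitone μ)
    (hμ : ∃ e : Equiv.Perm (Fin n), μ = hN.eigenvalues ∘ e)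
    (m : ℕ) (hm1 : 1 ≤ m) (hmn : m ≤ n) :
    (∑ i ∈ Finset.univ.filter (fun i : Fin n => (i : ℕ) < m), μ i) ≤
      ((χ : ℝ) - 1) * (∑ i ∈ Finset.univ.filter (fun i : Fin n => n - m ≤ (i : ℕ)), -μ i) := by
  obtain ⟨e, he'⟩ := hμ
  obtain ⟨v₀, w₀, hvw⟩ := he
  obtain ⟨c⟩ : G.Colorable χ := SimpleGraph.chromaticNumber_le_iff_colorable.mp (le_of_eq hχ)
  have hχ1 : 1 ≤ χ := (c v₀).pos
  -- entries of N vanish within color classes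
  have hNzero : ∀ v w, c v = c w → N v w = 0 := by
    intro v w hcvw
    have hadj : ¬ G.Adj v w := fun h => (c.valid h) hcvw
    rw [hNdef, Matrix.mul_diagonal, Matrix.diagonal_mul]
    simp [hadj]
  -- spectral decomposition over ℝ
  set lam : Fin n → ℝ := hN.eigenvalues with hlam
  set V : Matrix (Fin n) (Fin n) ℝ := (hN.eigenvectorUnitary : Matrix (Fin n) (Fin n) ℝ) with hVdef
  have hVmem := hN.eigenvectorUnitary.2
  have hV1 : V * Vᴴ = 1 := by
    have := Matrix.mem_unitaryGroup_iff.mp hVmem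
    simpa [Matrix.star_eq_conjTranspose] using this
  have hV2 : Vᴴ * V = 1 := by
    have := Matrix.mem_unitaryGroup_iff'.mp hVmem
    simpa [Matrix.star_eq_conjTranspose] using this
  have hspec : N = V * Matrix.diagonal lam * Vᴴ := by
    have := hN.spectral_theorem
    simpa [Matrix.star_eq_conjTranspose] using this
  -- complexification
  set φ : ℝ →+* ℂ := Complex.ofRealHom with hφ
  have hmapH : ∀ A : Matrix (Fin n) (Fin n) ℝ, (Aᴴ).map φ = (A.map φ)ᴴ := fun A =>
    Matrix.conjTranspose_map (φ : ℝ → ℂ) (fun x => by simp [hφ, Complex.conj_ofReal])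
  set W : Matrix (Fin n) (Fin n) ℂ := V.map φ with hWdef
  set M : Matrix (Fin n) (Fin n) ℂ := N.map φ with hMdef
  have hW1 : W * Wᴴ = 1 := by
    rw [hWdef, ← hmapH, ← Matrix.map_mul, hV1, Matrix.map_one _ φ.map_zero φ.map_one]
  have hW2 : Wᴴ * W = 1 := by
    rw [hWdef, ← hmapH, ← Matrix.map_mul, hV2, Matrix.map_one _ φ.map_zero φ.map_one]
  have hMspec : M = W * Matrix.diagonal (fun i => ((lam i : ℝ) : ℂ)) * Wᴴ := by
    rw [hMdef, hspec, Matrix.map_mul, Matrix.map_mul, hmapH, Matrix.diagonal_map φ.map_zero]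
    rfl
  -- the projection onto the top-m eigenvectors
  set ind : Fin n → ℂ := fun k => if ((e.symm k : ℕ) < m) then 1 else 0 with hind
  set P : Matrix (Fin n) (Fin n) ℂ := W * Matrix.diagonal ind * Wᴴ with hPdef
  have hindstar : star ind = ind := funext fun k => by
    simp [hind, apply_ite (star : ℂ → ℂ)]
  have hPH : Pᴴ = P := by
    rw [hPdef]
    simp only [Matrix.conjTranspose_mul, Matrix.conjTranspose_conjTranspose,
      Matrix.diagonal_conjTranspose, hindstar, mul_assoc]
  have hP2 : P * P = P := by
    rw [hPdef, sandwich W hW2]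
    have hii : (fun i => ind i * ind i) = ind := by
      funext i
      by_cases h : ((e.symm i : ℕ) < m) <;> simp [hind, h]
    rw [hii]
  have hindsum : ∑ k, ind k = (m : ℂ) := by
    rw [← Equiv.sum_comp e ind]
    have : ∀ i : Fin n, ind (e i) = if ((i : ℕ) < m) then (1 : ℂ) else 0 := by
      intro i; simp [hind]
    rw [Finset.sum_congr rfl fun i _ => this i, Finset.sum_boole, card_filt hmn]
  have hPt : P.trace = (m : ℂ) := by
    rw [hPdef, trace_sandwich W hW2, hindsum]
  -- roots of unity and the diagonal unitaries
  set ω : ℂ := Complex.exp (2 * Real.pi * Complex.I / χ) with hω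
  have hprim : IsPrimitiveRoot ω χ := Complex.isPrimitiveRoot_exp χ (by omega)
  have hω0 : ω ≠ 0 := Complex.exp_ne_zero _
  have hstarω : ∀ j : ℕ, star (ω ^ j) = (ω ^ j)⁻¹ := by
    intro j
    rw [star_pow, ← inv_pow]
    congr 1
    show (starRingEnd ℂ) ω = ω⁻¹
    rw [hω, ← Complex.exp_conj, ← Complex.exp_neg]
    congr 1
    simp only [map_div₀, _root_.map_mul, Complex.conj_I, Complex.conj_ofReal, map_ofNat, map_natCast] -- x
    push_cast
    ring
  set Dk : ℕ → Matrix (Fin n) (Fin n) ℂ :=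
    fun k => Matrix.diagonal (fun v => ω ^ (k * (c v : ℕ))) with hDk
  have hDH : ∀ k, (Dk k)ᴴ = Matrix.diagonal (fun v => (ω ^ (k * (c v : ℕ)))⁻¹) := by
    intro k
    rw [hDk, Matrix.diagonal_conjTranspose]
    exact congrArg Matrix.diagonal (funext fun v => hstarω _)
  have hDunit1 : ∀ k, Dk k * (Dk k)ᴴ = 1 := by
    intro k
    rw [hDH, hDk, Matrix.diagonal_mul_diagonal, ← Matrix.diagonal_one]
    exact congrArg Matrix.diagonal
      (funext fun v => mul_inv_cancel₀ (pow_ne_zero _ hω0))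
  have hDunit2 : ∀ k, (Dk k)ᴴ * Dk k = 1 := by
    intro k
    rw [hDH, hDk, Matrix.diagonal_mul_diagonal, ← Matrix.diagonal_one]
    exact congrArg Matrix.diagonal
      (funext fun v => inv_mul_cancel₀ (pow_ne_zero _ hω0))
  have hentry : ∀ (k : ℕ) (v w : Fin n), (Dk k * M * (Dk k)ᴴ) v w
      = ω ^ (k * (c v : ℕ)) * M v w * (ω ^ (k * (c w : ℕ)))⁻¹ := by
    intro k v w
    rw [hDH k]
    rw [Matrix.mul_diagonal, hDk, Matrix.diagonal_mul]
  -- sum over all conjugates vanishes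
  have hzero : ∑ k ∈ Finset.range χ, (Dk k * M * (Dk k)ᴴ) = 0 := by
    ext v w
    rw [Matrix.sum_apply, Matrix.zero_apply]
    by_cases hc : c v = c w
    · have hM0 : M v w = 0 := by
        simp [hMdef, Matrix.map_apply, hNzero v w hc]
      exact Finset.sum_eq_zero fun k _ => by rw [hentry, hM0, mul_zero, zero_mul]
    · set z : ℂ := ω ^ (c v : ℕ) * (ω ^ (c w : ℕ))⁻¹ with hz
      have hterm : ∀ k, (Dk k * M * (Dk k)ᴴ) v w = M v w * z ^ k := by
        intro k
        rw [hentry, mul_comm k (c v : ℕ), mul_comm k (c w : ℕ), pow_mul, pow_mul, hz,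
          mul_pow, inv_pow]
        ring
      rw [Finset.sum_congr rfl fun k _ => hterm k, ← Finset.mul_sum]
      have hz1 : z ≠ 1 := by
        intro h
        rw [hz, mul_inv_eq_one₀ (pow_ne_zero _ hω0)] at h
        exact hc (Fin.val_injective (hprim.pow_inj (c v).isLt (c w).isLt h))
      have hzχ : z ^ χ = 1 := by
        rw [hz, mul_pow, inv_pow, ← pow_mul, ← pow_mul, mul_comm (c v : ℕ) χ,
          mul_comm (c w : ℕ) χ, pow_mul, pow_mul, hprim.pow_eq_one]
        simp
      rw [geom_sum_eq hz1, hzχ]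
      simp
  -- decomposition of M
  have hD0 : Dk 0 = 1 := by
    have h1 : (fun v : Fin n => ω ^ (0 * (c v : ℕ))) = fun _ : Fin n => (1 : ℂ) := by
      funext v
      rw [zero_mul, pow_zero]
    simp only [hDk]
    rw [h1, Matrix.diagonal_one]
  have hdecomp : M = ∑ k ∈ Finset.Ico 1 χ, (Dk k * (-M) * (Dk k)ᴴ) := by
    have hsplit : (0 : Matrix (Fin n) (Fin n) ℂ)
        = Dk 0 * M * (Dk 0)ᴴ + ∑ k ∈ Finset.Ico 1 χ, (Dk k * M * (Dk k)ᴴ) := by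
      rw [← hzero, Finset.range_eq_Ico, Finset.sum_eq_sum_Ico_succ_bot (by omega : 0 < χ)]
    rw [hD0] at hsplit
    simp only [Matrix.conjTranspose_one, mul_one, one_mul] at hsplit
    have h0 : M + ∑ k ∈ Finset.Ico 1 χ, (Dk k * M * (Dk k)ᴴ) = 0 := hsplit.symm
    have hneg : ∀ k, Dk k * (-M) * (Dk k)ᴴ = -(Dk k * M * (Dk k)ᴴ) := by
      intro k
      rw [Matrix.mul_neg, Matrix.neg_mul]
    rw [Finset.sum_congr rfl fun k _ => hneg k, Finset.sum_neg_distrib]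
    exact eq_neg_of_add_eq_zero_left h0
  -- trace identity for the projection against M
  set lhs : ℝ := ∑ i ∈ Finset.univ.filter (fun i : Fin n => (i : ℕ) < m), μ i with hlhs
  have htrP : (P * M).trace = ((lhs : ℝ) : ℂ) := by
    rw [hPdef, hMspec, sandwich W hW2, trace_sandwich W hW2]
    rw [← Equiv.sum_comp e (fun k => ind k * ((lam k : ℝ) : ℂ))]
    have hterm : ∀ i : Fin n, ind (e i) * ((lam (e i) : ℝ) : ℂ)
        = if ((i : ℕ) < m) then ((μ i : ℝ) : ℂ) else 0 := by
      intro i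
      have : μ i = lam (e i) := by rw [he']; rfl
      simp [hind, ite_mul, this]
    rw [Finset.sum_congr rfl fun i _ => hterm i, ← Finset.sum_filter, hlhs]
    push_cast
    rfl
  -- the bottom-sum bound via kyfan
  set ν : Fin n → ℝ := fun j => -μ (Fin.rev j) with hν
  have hνa : Antitone ν := by
    intro a b hab
    rw [hν]
    simp only [neg_le_neg_iff]
    exact hμa (Fin.rev_le_rev.mpr hab)
  set σ : Equiv.Perm (Fin n) := e.symm.trans Fin.revPerm with hσdef
  have hσ : ∀ i, -lam i = ν (σ i) := by
    intro i
    rw [hν, hσdef]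
    simp only [Equiv.trans_apply, Fin.revPerm_apply, Fin.rev_rev]
    have : μ (e.symm i) = lam (e (e.symm i)) := by rw [he']; rfl
    rw [this, Equiv.apply_symm_apply]
  have hMneg : -M = W * Matrix.diagonal (fun i => ((-lam i : ℝ) : ℂ)) * Wᴴ := by
    have hdiag : Matrix.diagonal (fun i => ((-lam i : ℝ) : ℂ))
        = -Matrix.diagonal (fun i => ((lam i : ℝ) : ℂ)) := by
      rw [Matrix.diagonal_neg]
      exact congrArg Matrix.diagonal (funext fun i => by push_cast; ring)
    rw [hdiag, Matrix.mul_neg, Matrix.neg_mul, ← hMspec]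
  -- rewrite ν-sum as the target bottom sum
  set rhs : ℝ := ∑ i ∈ Finset.univ.filter (fun i : Fin n => n - m ≤ (i : ℕ)), -μ i with hrhs
  have hνsum : ∑ j ∈ Finset.univ.filter (fun j : Fin n => (j : ℕ) < m), ν j = rhs := by
    rw [hrhs]
    refine Finset.sum_nbij' (fun j => Fin.rev j) (fun i => Fin.rev i) ?_ ?_ ?_ ?_ ?_
    · intro j hj
      simp only [Finset.mem_filter, Finset.mem_univ, true_and] at hj ⊢
      rw [Fin.val_rev]
      omega
    · intro i hi
      simp only [Finset.mem_filter, Finset.mem_univ, true_and] at hi ⊢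
      rw [Fin.val_rev]
      omega
    · intro j _; exact Fin.rev_rev j
    · intro i _; exact Fin.rev_rev i
    · intro j _
      rw [hν]
  -- each conjugated term bounded
  have hbound : ∀ k, ((Dk k)ᴴ * P * Dk k * (-M)).trace.re ≤ rhs := by
    intro k
    have hQH : ((Dk k)ᴴ * P * Dk k)ᴴ = (Dk k)ᴴ * P * Dk k := by
      simp only [Matrix.conjTranspose_mul, Matrix.conjTranspose_conjTranspose, hPH, mul_assoc]
    have hQ2 : ((Dk k)ᴴ * P * Dk k) * ((Dk k)ᴴ * P * Dk k) = (Dk k)ᴴ * P * Dk k := by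
      simp only [mul_assoc]
      rw [← mul_assoc (Dk k) ((Dk k)ᴴ) (P * Dk k), hDunit1 k, one_mul,
        ← mul_assoc P P (Dk k), hP2]
    have hQt : ((Dk k)ᴴ * P * Dk k).trace = (m : ℂ) := by
      rw [Matrix.trace_mul_cycle, ← mul_assoc, hDunit1 k, one_mul, hPt]
    have := kyfan hm1 hmn W hW1 hW2 (fun i => -lam i) ((Dk k)ᴴ * P * Dk k) hQH hQ2 hQt
      ν hνa σ hσ
    beta_reduce at this
    rw [← hMneg, hνsum] at this
    exact this
  -- assemble
  have hcard : (Finset.Ico 1 χ).card = χ - 1 := by rw [Nat.card_Ico]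
  have htrace2 : (P * M).trace = ∑ k ∈ Finset.Ico 1 χ, ((Dk k)ᴴ * P * Dk k * (-M)).trace := by
    conv_lhs => rw [hdecomp]
    rw [Matrix.mul_sum, Matrix.trace_sum]
    refine Finset.sum_congr rfl fun k _ => ?_
    rw [← mul_assoc, ← mul_assoc, Matrix.trace_mul_cycle (P * Dk k) (-M) ((Dk k)ᴴ)]
    rw [← mul_assoc, ← mul_assoc]
  have hfinal : lhs ≤ ((χ - 1 : ℕ) : ℝ) * rhs := by
    have h1 : lhs = (P * M).trace.re := by rw [htrP]; simp
    rw [h1, htrace2, Complex.re_sum]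
    calc ∑ k ∈ Finset.Ico 1 χ, ((Dk k)ᴴ * P * Dk k * (-M)).trace.re
        ≤ ∑ _k ∈ Finset.Ico 1 χ, rhs := Finset.sum_le_sum fun k _ => hbound k
      _ = ((χ - 1 : ℕ) : ℝ) * rhs := by
          rw [Finset.sum_const, hcard, nsmul_eq_mul]
  have : ((χ - 1 : ℕ) : ℝ) = (χ : ℝ) - 1 := by
    rw [Nat.cast_sub hχ1, Nat.cast_one]
  rw [this] at hfinal
  exact hfinal
end

section
/- (Conversion of the adjacency matrix.) Let c ≥ 1 be an integer and let A ∈ ℂ^{n×n} be a Hermitian matrix that is colorable with c colors. Then there exist c diagonal unitary matrices U_1, …, U_c ∈ ℂ^{n×n}, each of whose diagonal entries is a c-th root of unity, such that Σ_{s=1}^{c} U_s† A U_s = 0; moreover one may take U_c to be the identity matrix. -/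
open Matrix

/-- **Conversion of the adjacency matrix.** If the Hermitian matrix `A ∈ ℂ^{n×n}` is colorable
with `c ≥ 1` colors, then there exist `c` diagonal unitary matrices `U_1, …, U_c`, each of
whose diagonal entries is a `c`-th root of unity, such that `Σ_s U_s† A U_s = 0`; moreover
one may take the last one, `U_c`, to be the identity matrix. -/
theorem stmt_15 {n c : ℕ} (hc : 1 ≤ c)
    (A : Matrix (Fin n) (Fin n) ℂ) (hA : A.IsHermitian)
    (f : Fin n → Fin c) (hf : ∀ k l : Fin n, f k = f l → A k l = 0) :
    ∃ U : Fin c → Matrix (Fin n) (Fin n) ℂ,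
      (∀ s : Fin c, ∃ u : Fin n → ℂ, U s = Matrix.diagonal u ∧ ∀ k : Fin n, (u k) ^ c = 1) ∧
      (∀ s : Fin c, U s ∈ Matrix.unitaryGroup (Fin n) ℂ) ∧
      (∑ s : Fin c, (U s)ᴴ * A * U s) = 0 ∧
      U ⟨c - 1, by omega⟩ = 1 := by
  set ζ : ℂ := Complex.exp (2 * Real.pi * Complex.I / c) with hζdef
  have hζ : IsPrimitiveRoot ζ c := Complex.isPrimitiveRoot_exp c (by omega)
  have hζc : ζ ^ c = 1 := hζ.pow_eq_one
  set u : Fin c → Fin n → ℂ := fun s k => ζ ^ ((s.val + 1) * (f k).val) with hu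
  have hupow : ∀ s k, (u s k) ^ c = 1 := by
    intro s k
    simp only [hu, ← pow_mul]
    rw [mul_comm ((s.val + 1) * (f k).val) c, pow_mul, hζc, one_pow]
  refine ⟨fun s => Matrix.diagonal (u s), fun s => ⟨u s, rfl, hupow s⟩, ?_, ?_, ?_⟩
  · intro s
    rw [Matrix.mem_unitaryGroup_iff]
    simp only [Matrix.star_eq_conjTranspose, Matrix.diagonal_conjTranspose,
      Matrix.diagonal_mul_diagonal]
    have habsζ : ‖ζ‖ = 1 := hζ.norm'_eq_one (by omega)
    have hone : ∀ k, u s k * (starRingEnd ℂ) (u s k) = 1 := by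
      intro k
      have habs : ‖u s k‖ = 1 := by
        rw [hu]; simp only [norm_pow, habsζ, one_pow]
      rw [Complex.mul_conj, Complex.normSq_eq_norm_sq, habs]
      norm_num
    ext k l
    rcases eq_or_ne k l with rfl | h
    · simp [Matrix.diagonal_apply_eq, Matrix.one_apply_eq, hone k]
    · simp [Matrix.diagonal_apply_ne _ h, Matrix.one_apply_ne h]
  · ext k l
    simp only [Matrix.sum_apply, Matrix.diagonal_conjTranspose, Matrix.zero_apply]
    have hentry : ∀ s : Fin c,
        ((Matrix.diagonal (star (u s)) * A * Matrix.diagonal (u s)) k l)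
          = star (u s k) * A k l * u s l := by
      intro s
      rw [Matrix.mul_diagonal, Matrix.diagonal_mul]
      rfl
    simp only [hentry]
    rcases eq_or_ne (f k) (f l) with h | h
    · simp [hf k l h]
    · have hζne : ζ ≠ 0 := fun h0 => by simp [h0, zero_pow (by omega : c ≠ 0)] at hζc
      have habsζ : ‖ζ‖ = 1 := hζ.norm'_eq_one (by omega)
      have hstarζ : (star ζ : ℂ) = ζ⁻¹ := by
        rw [show (star ζ) = (starRingEnd ℂ) ζ from rfl, ← Complex.inv_eq_conj habsζ]
      have hinv : (ζ ^ (f k).val)⁻¹ * ζ ^ (f l).val ≠ 1 := by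
        intro hcon
        apply h
        have hne : ζ ^ (f k).val ≠ 0 := pow_ne_zero _ hζne
        have heq : ζ ^ (f l).val = ζ ^ (f k).val := by
          field_simp at hcon
          exact hcon
        exact Fin.ext ((hζ.pow_inj (f l).isLt (f k).isLt heq)).symm
      set z : ℂ := (ζ ^ (f k).val)⁻¹ * ζ ^ (f l).val with hz
      have hzc : z ^ c = 1 := by
        rw [hz, mul_pow, inv_pow, ← pow_mul, ← pow_mul, mul_comm (f k).val c,
          mul_comm (f l).val c, pow_mul, pow_mul, hζc, one_pow, one_pow, inv_one, one_mul]
      have hstar : ∀ s : Fin c, star (u s k) * u s l = z ^ (s.val + 1) := by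
        intro s
        calc star (u s k) * u s l
            = (ζ ^ ((s.val + 1) * (f k).val))⁻¹ * ζ ^ ((s.val + 1) * (f l).val) := by
              rw [hu]; rw [star_pow, hstarζ, inv_pow]
          _ = z ^ (s.val + 1) := by
              rw [hz, mul_pow, inv_pow, ← pow_mul, ← pow_mul,
                Nat.mul_comm ((f k).val), Nat.mul_comm ((f l).val)]
      have hAz : ∀ s : Fin c, star (u s k) * A k l * u s l = A k l * z ^ (s.val + 1) := by
        intro s
        rw [mul_comm (star (u s k)) (A k l), mul_assoc, hstar s]
      simp only [hAz, ← Finset.mul_sum]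
      have hsum : ∑ s : Fin c, z ^ (s.val + 1) = 0 := by
        rw [Fin.sum_univ_eq_sum_range (fun i => z ^ (i + 1))]
        have hgs : ∑ i ∈ Finset.range c, z ^ (i + 1) = z * ∑ i ∈ Finset.range c, z ^ i := by
          rw [Finset.mul_sum]
          exact Finset.sum_congr rfl (fun i _ => by ring)
        rw [hgs]
        rw [geom_sum_eq hinv, hzc]
        simp
      rw [hsum, mul_zero]
  · show Matrix.diagonal (u ⟨c - 1, by omega⟩) = 1
    have h1 : u ⟨c - 1, by omega⟩ = fun _ => (1:ℂ) := by
      funext k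
      simp only [hu]
      have h2 : (c - 1) + 1 = c := by omega
      rw [h2, pow_mul, hζc, one_pow]
    rw [h1]
    exact Matrix.diagonal_one
end

section
/- Let c ≥ 2 be an integer, let P_1,…,P_c ∈ ℂ^{n×n} be orthogonal projectors with Σ_{a=1}^c P_a = I, and let 𝒞 be the corresponding pinching operator. Then for every Hermitian matrix X ∈ ℂ^{n×n} and every m with 1 ≤ m ≤ n: Σ_{i=1}^m λ_i↓(X) ≥ Σ_{i=1}^m λ_i↓((c/(c−1))·𝒞(X) − (1/(c−1))·X). -/
open Matrix

namespace Stmt18Aux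


lemma trace_conj_mul_self (A : Matrix (Fin n) (Fin n) ℂ) :
    (Aᴴ * A).trace = ((∑ i, ∑ k, Complex.normSq (A k i) : ℝ) : ℂ) := by
  simp only [Matrix.trace, Matrix.diag, Matrix.mul_apply, Matrix.conjTranspose_apply,
    Complex.normSq_eq_conj_mul_self, Complex.ofReal_sum, Complex.star_def]

lemma trace_conj_mul_self_nonneg (A : Matrix (Fin n) (Fin n) ℂ) :
    0 ≤ (Aᴴ * A).trace.re := by
  rw [trace_conj_mul_self, Complex.ofReal_re]
  exact Finset.sum_nonneg fun i _ => Finset.sum_nonneg fun k _ => Complex.normSq_nonneg _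

lemma eq_zero_of_trace (A : Matrix (Fin n) (Fin n) ℂ) (h : (Aᴴ * A).trace.re = 0) :
    A = 0 := by
  rw [trace_conj_mul_self, Complex.ofReal_re] at h
  ext k i
  have h1 : ∀ i ∈ Finset.univ, (0:ℝ) ≤ ∑ k, Complex.normSq (A k i) :=
    fun i _ => Finset.sum_nonneg fun k _ => Complex.normSq_nonneg _
  have h2 := (Finset.sum_eq_zero_iff_of_nonneg h1).mp h i (Finset.mem_univ i)
  have h3 := (Finset.sum_eq_zero_iff_of_nonneg
    (fun k _ => Complex.normSq_nonneg (A k i))).mp h2 k (Finset.mem_univ k)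
  simpa using Complex.normSq_eq_zero.mp h3

/-- diagonal entries of a Hermitian idempotent are real and nonnegative. -/
lemma diag_of_proj (R : Matrix (Fin n) (Fin n) ℂ) (hR : Rᴴ = R) (hR2 : R * R = R) (j : Fin n) :
    R j j = ((∑ k, Complex.normSq (R k j) : ℝ) : ℂ) := by
  have hjk : ∀ k, R j k = star (R k j) := fun k => by
    rw [← hR, Matrix.conjTranspose_apply, hR]
  conv_lhs => rw [← hR2]
  rw [Matrix.mul_apply]
  simp only [hjk, Complex.normSq_eq_conj_mul_self, Complex.ofReal_sum, Complex.star_def]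


lemma filter_card {n m : ℕ} (hmn : m ≤ n) :
    (Finset.univ.filter (fun i : Fin n => (i : ℕ) < m)).card = m := by
  have : (Finset.univ.filter (fun i : Fin n => (i : ℕ) < m)) =
      Finset.map (Fin.castLEEmb hmn) Finset.univ := by
    ext j
    simp only [Finset.mem_filter, Finset.mem_univ, true_and, Finset.mem_map,
      Fin.castLEEmb_apply]
    constructor
    · intro hj; exact ⟨⟨(j:ℕ), hj⟩, rfl⟩
    · rintro ⟨a, rfl⟩; exact a.isLt
  rw [this, Finset.card_map, Finset.card_univ, Fintype.card_fin]

lemma scalar_bound {n m : ℕ} (hm1 : 1 ≤ m) (hmn : m ≤ n) (μ s : Fin n → ℝ)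
    (hμa : Antitone μ) (hs0 : ∀ i, 0 ≤ s i) (hs1 : ∀ i, s i ≤ 1)
    (hsum : ∑ i, s i = m) :
    ∑ i, μ i * s i ≤ ∑ i ∈ Finset.univ.filter (fun i : Fin n => (i : ℕ) < m), μ i := by
  have hmn' : m - 1 < n := lt_of_lt_of_le (Nat.sub_lt hm1 one_pos) hmn
  set θ := μ ⟨m - 1, hmn'⟩ with hθ
  have key : ∀ i : Fin n,
      μ i * s i - (if (i:ℕ) < m then μ i else 0) ≤
        θ * (s i - (if (i:ℕ) < m then 1 else 0)) := by
    intro i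
    by_cases h : (i:ℕ) < m
    · simp only [if_pos h]
      have h1 : θ ≤ μ i := hμa (by simp [Fin.le_def]; omega)
      nlinarith [hs1 i]
    · simp only [if_neg h]
      have h2 : μ i ≤ θ := hμa (by simp [Fin.le_def]; omega)
      nlinarith [hs0 i]
  have hsum1 : ∑ i : Fin n, (if (i:ℕ) < m then (1:ℝ) else 0) = m := by
    rw [← Finset.sum_filter]
    simp [filter_card hmn]
  have hsum2 : ∑ i ∈ Finset.univ.filter (fun i : Fin n => (i : ℕ) < m), μ i
      = ∑ i : Fin n, (if (i:ℕ) < m then μ i else 0) := (Finset.sum_filter _ _)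
  have h := Finset.sum_le_sum (fun i (_ : i ∈ Finset.univ) => key i)
  rw [Finset.sum_sub_distrib, ← Finset.mul_sum, Finset.sum_sub_distrib, hsum1, hsum, sub_self,
    mul_zero, sub_nonpos] at h
  rw [hsum2]
  exact h


lemma kyfan {n : ℕ} {X : Matrix (Fin n) (Fin n) ℂ} (hX : X.IsHermitian)
    (μ : Fin n → ℝ) (hμa : Antitone μ) (e : Equiv.Perm (Fin n)) (hμ : μ = hX.eigenvalues ∘ e)
    {m : ℕ} (hm1 : 1 ≤ m) (hmn : m ≤ n)
    (Q : Matrix (Fin n) (Fin n) ℂ) (hQ1 : Qᴴ = Q) (hQ2 : Q * Q = Q) (hQt : Q.trace = (m : ℂ)) :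
    (Q * X).trace.re ≤ ∑ i ∈ Finset.univ.filter (fun i : Fin n => (i : ℕ) < m), μ i := by
  set U : Matrix (Fin n) (Fin n) ℂ := (hX.eigenvectorUnitary : Matrix (Fin n) (Fin n) ℂ) with hU
  have hU1 : U * star U = 1 := Matrix.mem_unitaryGroup_iff.mp hX.eigenvectorUnitary.2
  have hU2 : star U * U = 1 := Matrix.mem_unitaryGroup_iff'.mp hX.eigenvectorUnitary.2
  set R : Matrix (Fin n) (Fin n) ℂ := star U * Q * U with hR
  have hQs : star Q = Q := by rw [Matrix.star_eq_conjTranspose, hQ1]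
  have hRh : Rᴴ = R := by
    rw [← Matrix.star_eq_conjTranspose, hR, StarMul.star_mul, StarMul.star_mul, star_star, hQs,
      mul_assoc]
  have hR2 : R * R = R := by
    rw [hR]
    calc star U * Q * U * (star U * Q * U)
        = star U * (Q * (U * star U) * Q) * U := by simp only [mul_assoc]
      _ = star U * Q * U := by rw [hU1, mul_one, hQ2]
  have htr : (Q * X).trace = ∑ j, R j j * (hX.eigenvalues j : ℂ) := by
    conv_lhs => rw [show X = U * diagonal (RCLike.ofReal ∘ hX.eigenvalues) * star U from
      hX.spectral_theorem]
    rw [show Q * (U * diagonal (RCLike.ofReal ∘ hX.eigenvalues) * star U)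
        = (Q * U * diagonal (RCLike.ofReal ∘ hX.eigenvalues)) * star U by
          simp only [mul_assoc],
      Matrix.trace_mul_comm, show star U * (Q * U * diagonal (RCLike.ofReal ∘ hX.eigenvalues))
        = R * diagonal (RCLike.ofReal ∘ hX.eigenvalues) by rw [hR]; simp only [mul_assoc]]
    simp [Matrix.trace, Matrix.diag, Matrix.mul_diagonal]
  set s : Fin n → ℝ := fun j => (R j j).re with hs
  have hdiag : ∀ j, R j j = ((s j : ℝ) : ℂ) := by
    intro j
    rw [diag_of_proj R hRh hR2 j, hs]
    simp [diag_of_proj R hRh hR2 j]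
  have hs0 : ∀ j, 0 ≤ s j := by
    intro j
    have := diag_of_proj R hRh hR2 j
    rw [hs]; simp only [this, Complex.ofReal_re]
    exact Finset.sum_nonneg fun k _ => Complex.normSq_nonneg _
  have hs1 : ∀ j, s j ≤ 1 := by
    intro j
    have hRh' : (1 - R)ᴴ = 1 - R := by
      rw [Matrix.conjTranspose_sub, hRh, Matrix.conjTranspose_one]
    have hR2' : (1 - R) * (1 - R) = 1 - R := by
      simp only [mul_sub, sub_mul, hR2, one_mul, mul_one]; abel
    have := diag_of_proj (1 - R) hRh' hR2' j
    have h1 : ((1 : Matrix (Fin n) (Fin n) ℂ) - R) j j = 1 - R j j := by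
      simp [Matrix.sub_apply, Matrix.one_apply_eq]
    rw [h1] at this
    have : (1 - R j j).re = ∑ k, Complex.normSq ((1 - R) k j) := by
      rw [this, Complex.ofReal_re]
    have h2 : 0 ≤ (1 - R j j).re :=
      this ▸ Finset.sum_nonneg fun k _ => Complex.normSq_nonneg _
    simp only [Complex.sub_re, Complex.one_re] at h2
    rw [hs]; linarith
  have hssum : ∑ j, s j = m := by
    have h1 : R.trace = Q.trace := by
      rw [hR, Matrix.trace_mul_cycle, hU1, one_mul]
    have h3 := congrArg Complex.re h1
    rw [hQt] at h3
    simp only [Matrix.trace, Matrix.diag, Complex.re_sum] at h3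
    simpa using h3
  have hre : (Q * X).trace.re = ∑ j, hX.eigenvalues j * s j := by
    rw [htr, Complex.re_sum]
    congr 1; funext j
    rw [hdiag j]
    simp [mul_comm]
  rw [hre]
  have hre2 : ∑ j, hX.eigenvalues j * s j = ∑ i, μ i * s (e i) := by
    rw [← Equiv.sum_comp e (fun j => hX.eigenvalues j * s j)]
    exact Finset.sum_congr rfl fun i _ => by rw [hμ]; rfl
  rw [hre2]
  exact scalar_bound hm1 hmn μ (fun i => s (e i)) hμa (fun i => hs0 _) (fun i => hs1 _)
    (by rw [Equiv.sum_comp e s, hssum])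


lemma proj_orth {n c : ℕ} (P : Fin c → Matrix (Fin n) (Fin n) ℂ)
    (hP1 : ∀ a, (P a)ᴴ = P a) (hP2 : ∀ a, P a * P a = P a)
    (hPsum : ∑ a, P a = 1) {a b : Fin c} (hab : a ≠ b) : P b * P a = 0 := by
  have key : ∀ b', P a * P b' * P a = (P b' * P a)ᴴ * (P b' * P a) := by
    intro b'
    rw [Matrix.conjTranspose_mul, hP1, hP1]
    calc P a * P b' * P a = P a * (P b' * P b') * P a := by rw [hP2]
      _ = P a * P b' * (P b' * P a) := by simp only [mul_assoc]
  have hsum2 : ∑ b', P a * P b' * P a = P a := by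
    rw [← Finset.sum_mul, ← Finset.mul_sum, hPsum, mul_one, hP2]
  have herase : ∑ b' ∈ Finset.univ.erase a, P a * P b' * P a = 0 := by
    rw [Finset.sum_erase_eq_sub (Finset.mem_univ a), hsum2, mul_assoc, hP2, hP2, sub_self]
  have htr : ∑ b' ∈ Finset.univ.erase a, ((P b' * P a)ᴴ * (P b' * P a)).trace.re = 0 := by
    have := congrArg Matrix.trace herase
    rw [Matrix.trace_sum, Matrix.trace_zero] at this
    have h4 := congrArg Complex.re this
    rw [Complex.re_sum, Complex.zero_re] at h4
    rw [← h4]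
    exact Finset.sum_congr rfl fun b' _ => by rw [key]
  have hmem : b ∈ Finset.univ.erase a := Finset.mem_erase.mpr ⟨Ne.symm hab, Finset.mem_univ b⟩
  have hzero := (Finset.sum_eq_zero_iff_of_nonneg
    (fun b' _ => trace_conj_mul_self_nonneg (P b' * P a))).mp htr b hmem
  exact eq_zero_of_trace _ hzero

lemma root_sum {c : ℕ} (hc0 : c ≠ 0) {ω : ℂ} (hω : IsPrimitiveRoot ω c) (a b : Fin c) :
    ∑ k : Fin c, (ω ^ (a : ℕ) * star (ω ^ (b : ℕ))) ^ (k : ℕ) =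
      if a = b then (c : ℂ) else 0 := by
  have hpow : ω ^ c = 1 := hω.pow_eq_one
  have hnorm : ∀ d : ℕ, star (ω ^ d) * ω ^ d = 1 := by
    intro d
    have h1 : ‖ω‖ = 1 := Complex.norm_eq_one_of_pow_eq_one hpow hc0
    rw [Complex.star_def, Complex.conj_mul']
    norm_cast
    rw [norm_pow, h1, one_pow, one_pow]
  set x := ω ^ (a : ℕ) * star (ω ^ (b : ℕ)) with hx
  rw [Fin.sum_univ_eq_sum_range (fun k => x ^ k) c]
  by_cases hab : a = b
  · subst hab
    have hx1 : x = 1 := by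
      rw [hx, mul_comm]; exact hnorm _
    simp [hx1, if_pos rfl]
  · rw [if_neg hab]
    have hxc : x ^ c = 1 := by
      rw [hx, mul_pow, ← pow_mul, mul_comm (a:ℕ) c, pow_mul, hpow, one_pow, one_mul,
        ← star_pow, ← pow_mul, mul_comm (b:ℕ) c, pow_mul, hpow, one_pow]
      exact star_one ℂ
    have hx1 : x ≠ 1 := by
      intro h
      have h2 : ω ^ (a : ℕ) = ω ^ (b : ℕ) := by
        have := congrArg (· * ω ^ (b : ℕ)) h
        simp only [one_mul] at this
        rw [mul_assoc, hnorm, mul_one] at this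
        exact this
      exact hab (Fin.ext (hω.pow_inj a.isLt b.isLt h2))
    rw [geom_sum_eq hx1 c, hxc, sub_self, zero_div]


lemma star_mul_self_of_norm_one {z : ℂ} (h : ‖z‖ = 1) : star z * z = 1 := by
  rw [Complex.star_def, Complex.conj_mul']
  norm_cast
  rw [h, one_pow]

lemma sum_smul_mul {n c : ℕ} (z w : Fin c → ℂ) (P Q : Fin c → Matrix (Fin n) (Fin n) ℂ)
    (M : Matrix (Fin n) (Fin n) ℂ) :
    (∑ a, z a • P a) * M * (∑ b, w b • Q b)
      = ∑ a, ∑ b, (z a * w b) • (P a * M * Q b) := by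
  simp only [Finset.sum_mul, Finset.mul_sum, smul_mul_assoc, mul_smul_comm, smul_smul]
  rw [Finset.sum_comm]
  refine Finset.sum_congr rfl fun a _ => ?_
  rw [Finset.smul_sum]
  refine Finset.sum_congr rfl fun b _ => ?_
  rw [smul_smul, mul_comm (w a) (z b)]


lemma pinch_decomp {n c : ℕ} (hc : 2 ≤ c)
    (P : Fin c → Matrix (Fin n) (Fin n) ℂ)
    (hP1 : ∀ a, (P a)ᴴ = P a) (hP2 : ∀ a, P a * P a = P a)
    (hPsum : ∑ a, P a = 1)
    (X Y : Matrix (Fin n) (Fin n) ℂ)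
    (hYdef : Y = ((c : ℂ) / ((c : ℂ) - 1)) • (∑ a : Fin c, P a * X * P a) -
      (((c : ℂ) - 1))⁻¹ • X) :
    ∃ U : Fin c → Matrix (Fin n) (Fin n) ℂ,
      (∀ k, (U k)ᴴ * U k = 1 ∧ U k * (U k)ᴴ = 1) ∧
      ∃ k₀ : Fin c,
        Y = ((c:ℂ) - 1)⁻¹ • ∑ k ∈ Finset.univ.erase k₀, U k * X * (U k)ᴴ := by
  have hc0 : c ≠ 0 := by omega
  set ω : ℂ := Complex.exp (2 * Real.pi * Complex.I / c) with hω
  have hprim : IsPrimitiveRoot ω c := Complex.isPrimitiveRoot_exp c hc0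
  have hnorm : ‖ω‖ = 1 := Complex.norm_eq_one_of_pow_eq_one hprim.pow_eq_one hc0
  have hnorm' : ∀ d k : ℕ, ‖(ω ^ d) ^ k‖ = 1 := by
    intro d k; rw [norm_pow, norm_pow, hnorm, one_pow, one_pow]
  set z : Fin c → Fin c → ℂ := fun k a => (ω ^ (a : ℕ)) ^ (k : ℕ) with hz
  set U : Fin c → Matrix (Fin n) (Fin n) ℂ := fun k => ∑ a, z k a • P a with hU
  have hUH : ∀ k, (U k)ᴴ = ∑ a, star (z k a) • P a := by
    intro k
    rw [hU]
    simp only [Matrix.conjTranspose_sum, Matrix.conjTranspose_smul]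
    exact Finset.sum_congr rfl fun a _ => by rw [hP1]
  refine ⟨U, fun k => ?_, ⟨0, by omega⟩, ?_⟩
  · have h1 : (U k)ᴴ * U k = 1 := by
      have : (U k)ᴴ * U k = (∑ a, star (z k a) • P a) * 1 * (∑ b, z k b • P b) := by
        rw [hUH, mul_one, hU]
      rw [this, sum_smul_mul]
      have : ∀ a : Fin c, ∑ b, (star (z k a) * z k b) • (P a * 1 * P b) = P a := by
        intro a
        rw [Finset.sum_eq_single a]
        · rw [star_mul_self_of_norm_one (hnorm' _ _), one_smul, mul_one, hP2]
        · intro b _ hba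
          rw [mul_one, proj_orth P hP1 hP2 hPsum hba, smul_zero]
        · intro h; exact absurd (Finset.mem_univ a) h
      rw [Finset.sum_congr rfl fun a _ => this a, hPsum]
    exact ⟨h1, mul_eq_one_comm.mp h1⟩
  · -- sum over all k of U k X (U k)ᴴ equals c • pinching
    have hexp : ∀ k : Fin c, U k * X * (U k)ᴴ
        = ∑ a, ∑ b, (z k a * star (z k b)) • (P a * X * P b) := by
      intro k; rw [hUH, hU]; exact sum_smul_mul _ _ _ _ _
    have hUsum : ∑ k : Fin c, U k * X * (U k)ᴴ = (c:ℂ) • ∑ a, P a * X * P a := by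
      rw [Finset.sum_congr rfl fun k _ => hexp k]
      rw [Finset.sum_comm]
      have h2 : ∀ a : Fin c, ∑ k : Fin c, ∑ b, (z k a * star (z k b)) • (P a * X * P b)
          = (c:ℂ) • (P a * X * P a) := by
        intro a
        rw [Finset.sum_comm]
        have h3 : ∀ b : Fin c, ∑ k : Fin c, (z k a * star (z k b)) • (P a * X * P b)
            = (if a = b then (c:ℂ) else 0) • (P a * X * P b) := by
          intro b
          rw [← Finset.sum_smul, ← root_sum hc0 hprim a b]
          congr 1
          refine Finset.sum_congr rfl fun k _ => ?_
          rw [hz, mul_pow, ← star_pow]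
        rw [Finset.sum_congr rfl fun b _ => h3 b]
        simp [ite_smul, Finset.sum_ite_eq]
      rw [Finset.sum_congr rfl fun a _ => h2 a, ← Finset.smul_sum]
    have hU0 : U ⟨0, by omega⟩ = 1 := by
      rw [hU]
      simp only [hz]
      norm_num
      exact hPsum
    have hsplit : ∑ k ∈ Finset.univ.erase (⟨0, by omega⟩ : Fin c), U k * X * (U k)ᴴ
        = (c:ℂ) • (∑ a, P a * X * P a) - X := by
      rw [Finset.sum_erase_eq_sub (Finset.mem_univ _), hUsum, hU0]
      simp
    rw [hsplit, hYdef, smul_sub, smul_smul]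
    congr 1
    rw [div_eq_inv_mul]

end Stmt18Aux

open Stmt18Aux in
set_option maxHeartbeats 1000000 in
/-- Let `c ≥ 2`, let `P_1, …, P_c ∈ ℂ^{n×n}` be orthogonal projectors with `Σ_a P_a = I`, and
let `𝒞(X) = Σ_a P_a X P_a` be the corresponding pinching.  Then for every Hermitian
`X ∈ ℂ^{n×n}` and every `1 ≤ m ≤ n`:
`Σ_{i=1}^m λ_i↓(X) ≥ Σ_{i=1}^m λ_i↓((c/(c-1))·𝒞(X) - (1/(c-1))·X)`.
Here `μ` (resp. `ν`) is the non-increasing enumeration of the eigenvalues of `X`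
(resp. of `(c/(c-1))·𝒞(X) - (1/(c-1))·X`). -/
theorem stmt_18 {n c : ℕ} (hc : 2 ≤ c)
    (P : Fin c → Matrix (Fin n) (Fin n) ℂ)
    (hP1 : ∀ a : Fin c, (P a)ᴴ = P a)
    (hP2 : ∀ a : Fin c, P a * P a = P a)
    (hPsum : ∑ a : Fin c, P a = 1)
    (X : Matrix (Fin n) (Fin n) ℂ) (hX : X.IsHermitian)
    (Y : Matrix (Fin n) (Fin n) ℂ)
    (hYdef : Y = ((c : ℂ) / ((c : ℂ) - 1)) • (∑ a : Fin c, P a * X * P a) -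
      (((c : ℂ) - 1))⁻¹ • X)
    (hY : Y.IsHermitian)
    (μ ν : Fin n → ℝ)
    (hμa : Antitone μ) (hμ : ∃ e : Equiv.Perm (Fin n), μ = hX.eigenvalues ∘ e)
    (hνa : Antitone ν) (hν : ∃ e : Equiv.Perm (Fin n), ν = hY.eigenvalues ∘ e)
    (m : ℕ) (hm1 : 1 ≤ m) (hmn : m ≤ n) :
    (∑ i ∈ Finset.univ.filter (fun i : Fin n => (i : ℕ) < m), μ i) ≥
      (∑ i ∈ Finset.univ.filter (fun i : Fin n => (i : ℕ) < m), ν i) := by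
  obtain ⟨e, hμe⟩ := hμ
  obtain ⟨eY, hνe⟩ := hν
  obtain ⟨U, hUun, k₀, hYsum⟩ := pinch_decomp hc P hP1 hP2 hPsum X Y hYdef
  -- build the spectral projector Q for Y
  set S : Finset (Fin n) := (Finset.univ.filter (fun i : Fin n => (i:ℕ) < m)).image eY with hS
  have hScard : S.card = m := by
    rw [hS, Finset.card_image_of_injective _ eY.injective, filter_card hmn]
  set d : Fin n → ℂ := fun j => if j ∈ S then 1 else 0 with hd
  set E := Matrix.diagonal d with hE
  have hdstar : star d = d := by
    funext j
    simp only [Pi.star_apply, hd]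
    split <;> simp
  have hEH : Eᴴ = E := by rw [hE, Matrix.diagonal_conjTranspose, hdstar]
  have hEE : E * E = E := by
    rw [hE, Matrix.diagonal_mul_diagonal]
    refine (Matrix.diagonal_eq_diagonal_iff).mpr fun j => ?_
    simp only [hd]
    split <;> simp
  set UY : Matrix (Fin n) (Fin n) ℂ := (hY.eigenvectorUnitary : Matrix (Fin n) (Fin n) ℂ)
    with hUY
  have hUY1 : UY * star UY = 1 := Matrix.mem_unitaryGroup_iff.mp hY.eigenvectorUnitary.2
  have hUY2 : star UY * UY = 1 := Matrix.mem_unitaryGroup_iff'.mp hY.eigenvectorUnitary.2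
  set Q := UY * E * star UY with hQ
  have hQ1 : Qᴴ = Q := by
    rw [← Matrix.star_eq_conjTranspose, hQ, StarMul.star_mul, StarMul.star_mul, star_star,
      Matrix.star_eq_conjTranspose E, hEH, mul_assoc]
  have hQ2 : Q * Q = Q := by
    rw [hQ]
    calc UY * E * star UY * (UY * E * star UY)
        = UY * (E * (star UY * UY) * E) * star UY := by simp only [mul_assoc]
      _ = UY * E * star UY := by rw [hUY2, mul_one, hEE]
  have htrE : E.trace = (m : ℂ) := by
    rw [hE, Matrix.trace_diagonal]
    have : ∑ i, d i = ∑ i ∈ S, (1:ℂ) := by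
      rw [hd, Finset.sum_ite_mem, Finset.univ_inter]
    rw [this, Finset.sum_const, hScard, nsmul_eq_mul, mul_one]
  have hQt : Q.trace = (m : ℂ) := by
    rw [hQ, Matrix.trace_mul_cycle, hUY2, one_mul, htrE]
  have hYspec : Y = UY * diagonal (RCLike.ofReal ∘ hY.eigenvalues) * star UY :=
    hY.spectral_theorem
  clear_value S d E UY Q
  -- trace of Q * Y equals the top-m sum of ν
  have hQY : (Q * Y).trace = ((∑ i ∈ Finset.univ.filter (fun i : Fin n => (i:ℕ) < m), ν i : ℝ)
      : ℂ) := by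
    have hQY0 : Q * Y = UY * (E * diagonal (RCLike.ofReal ∘ hY.eigenvalues)) * star UY := by
      conv_lhs => rw [hQ, hYspec]
      calc UY * E * star UY * (UY * diagonal (RCLike.ofReal ∘ hY.eigenvalues) * star UY)
          = UY * (E * (star UY * UY) * diagonal (RCLike.ofReal ∘ hY.eigenvalues)) * star UY
            := by simp only [mul_assoc]
        _ = _ := by rw [hUY2, mul_one]
    calc (Q * Y).trace
        = (UY * (E * diagonal (RCLike.ofReal ∘ hY.eigenvalues)) * star UY).trace := by
          rw [hQY0]
      _ = (E * diagonal (RCLike.ofReal ∘ hY.eigenvalues)).trace := by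
          rw [Matrix.trace_mul_cycle, hUY2, one_mul]
      _ = ∑ j, d j * (hY.eigenvalues j : ℂ) := by
          rw [hE, Matrix.diagonal_mul_diagonal, Matrix.trace_diagonal]
          rfl
      _ = ∑ j ∈ S, (hY.eigenvalues j : ℂ) := by
          have hterm : ∀ j, d j * (hY.eigenvalues j : ℂ)
              = if j ∈ S then ((hY.eigenvalues j : ℝ) : ℂ) else 0 := by
            intro j
            simp only [hd]
            split <;> simp
          rw [Finset.sum_congr rfl fun j _ => hterm j, Finset.sum_ite_mem, Finset.univ_inter]
      _ = _ := by
          rw [hS, Finset.sum_image (fun x _ y _ h => eY.injective h)]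
          rw [Complex.ofReal_sum]
          refine Finset.sum_congr rfl fun i _ => ?_
          rw [hνe]; rfl
  -- rewrite trace (Q*Y) via the unitary decomposition
  have hc1R : ((c:ℝ) - 1) ≠ 0 := by
    have : (2:ℝ) ≤ (c:ℝ) := by exact_mod_cast hc
    linarith
  have hcast : ((c:ℂ) - 1)⁻¹ = ((((c:ℝ) - 1)⁻¹ : ℝ) : ℂ) := by
    push_cast
    ring
  have hQYsum : (Q * Y).trace = ((((c:ℝ) - 1)⁻¹ : ℝ) : ℂ) *
      ∑ k ∈ Finset.univ.erase k₀, (Q * (U k * X * (U k)ᴴ)).trace := by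
    rw [← hcast]
    conv_lhs => rw [hYsum]
    rw [mul_smul_comm, Matrix.mul_sum, Matrix.trace_smul, Matrix.trace_sum, smul_eq_mul]
  -- bound each term by Ky Fan
  have hbound : ∀ k ∈ Finset.univ.erase k₀, (Q * (U k * X * (U k)ᴴ)).trace.re ≤
      ∑ i ∈ Finset.univ.filter (fun i : Fin n => (i : ℕ) < m), μ i := by
    intro k _
    obtain ⟨hUk1, hUk2⟩ := hUun k
    have h6 : (Q * (U k * X * (U k)ᴴ)).trace = (((U k)ᴴ * Q * U k) * X).trace := by
      rw [show Q * (U k * X * (U k)ᴴ) = (Q * (U k) * X) * (U k)ᴴ by simp only [mul_assoc],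
        Matrix.trace_mul_comm,
        show (U k)ᴴ * (Q * U k * X) = ((U k)ᴴ * Q * U k) * X by simp only [mul_assoc]]
    rw [h6]
    have hQk1 : ((U k)ᴴ * Q * U k)ᴴ = (U k)ᴴ * Q * U k := by
      rw [Matrix.conjTranspose_mul, Matrix.conjTranspose_mul, hQ1,
        Matrix.conjTranspose_conjTranspose, mul_assoc]
    have hQk2 : ((U k)ᴴ * Q * U k) * ((U k)ᴴ * Q * U k) = (U k)ᴴ * Q * U k := by
      calc (U k)ᴴ * Q * U k * ((U k)ᴴ * Q * U k)
          = (U k)ᴴ * (Q * (U k * (U k)ᴴ) * Q) * U k := by simp only [mul_assoc]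
        _ = (U k)ᴴ * Q * U k := by rw [hUk2, mul_one, hQ2, mul_assoc]
    have hQkt : ((U k)ᴴ * Q * U k).trace = (m : ℂ) := by
      rw [Matrix.trace_mul_cycle, hUk2, one_mul, hQt]
    exact kyfan hX μ hμa e hμe hm1 hmn _ hQk1 hQk2 hQkt
  -- assemble
  have hνtop : (∑ i ∈ Finset.univ.filter (fun i : Fin n => (i : ℕ) < m), ν i)
      = ((c:ℝ) - 1)⁻¹ * ∑ k ∈ Finset.univ.erase k₀, (Q * (U k * X * (U k)ᴴ)).trace.re := by
    have := congrArg Complex.re (hQY.symm.trans hQYsum)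
    rw [Complex.ofReal_re] at this
    rw [this, Complex.re_ofReal_mul, Complex.re_sum]
  have hcard : ((Finset.univ.erase k₀).card : ℝ) = (c:ℝ) - 1 := by
    rw [Finset.card_erase_of_mem (Finset.mem_univ k₀), Finset.card_univ, Fintype.card_fin]
    have : 1 ≤ c := by omega
    push_cast [Nat.cast_sub this]
    ring
  have hsle : ∑ k ∈ Finset.univ.erase k₀, (Q * (U k * X * (U k)ᴴ)).trace.re ≤
      ((c:ℝ) - 1) * ∑ i ∈ Finset.univ.filter (fun i : Fin n => (i : ℕ) < m), μ i := by
    calc ∑ k ∈ Finset.univ.erase k₀, (Q * (U k * X * (U k)ᴴ)).trace.re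
        ≤ ∑ _k ∈ Finset.univ.erase k₀,
            ∑ i ∈ Finset.univ.filter (fun i : Fin n => (i : ℕ) < m), μ i :=
          Finset.sum_le_sum hbound
      _ = _ := by rw [Finset.sum_const, nsmul_eq_mul, hcard]
  rw [ge_iff_le, hνtop]
  have hinv : (0:ℝ) ≤ ((c:ℝ) - 1)⁻¹ := by
    have : (2:ℝ) ≤ (c:ℝ) := by exact_mod_cast hc
    have h9 : (0:ℝ) ≤ (c:ℝ) - 1 := by linarith
    exact inv_nonneg.mpr h9
  calc ((c:ℝ) - 1)⁻¹ * ∑ k ∈ Finset.univ.erase k₀, (Q * (U k * X * (U k)ᴴ)).trace.re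
      ≤ ((c:ℝ) - 1)⁻¹ * (((c:ℝ) - 1) *
          ∑ i ∈ Finset.univ.filter (fun i : Fin n => (i : ℕ) < m), μ i) :=
        mul_le_mul_of_nonneg_left hsle hinv
    _ = _ := by
        rw [← mul_assoc, inv_mul_cancel₀ hc1R, one_mul]
end

section
/- Let G be a finite simple graph on n vertices with at least one edge and chromatic number χ. Then δ_1 ≤ (χ − 1)·(2θ_1 − δ_1); equivalently, χ ≥ 1 + δ_1/(2θ_1 − δ_1). Moreover, the chain of inequalities 1 + μ_1/(μ_1 − δ_1 + θ_1) ≥ 1 + δ_1/(2θ_1 − δ_1) ≥ 1 + δ_1/(2n − δ_1) ≥ 1 + μ_1/(n − μ_1) holds (using δ_1 ≥ 2μ_1 and θ_1 ≤ n). -/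
open Matrix Finset BigOperators

section Stmt19Aux

lemma stmt19_dot_self_eigenvectorBasis {n : ℕ} {M : Matrix (Fin n) (Fin n) ℝ}
    (hM : M.IsHermitian) (i : Fin n) :
    ⇑(hM.eigenvectorBasis i) ⬝ᵥ ⇑(hM.eigenvectorBasis i) = 1 := by
  have h := hM.eigenvectorBasis.orthonormal.1 i
  have h2 : (inner ℝ (hM.eigenvectorBasis i) (hM.eigenvectorBasis i) : ℝ) = 1 := by
    rw [real_inner_self_eq_norm_mul_norm, h]; ring
  rw [EuclideanSpace.inner_eq_star_dotProduct] at h2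
  simpa using h2

lemma stmt19_eigenvalue_eq_dot {n : ℕ} {M : Matrix (Fin n) (Fin n) ℝ}
    (hM : M.IsHermitian) (i : Fin n) :
    hM.eigenvalues i = ⇑(hM.eigenvectorBasis i) ⬝ᵥ (M *ᵥ ⇑(hM.eigenvectorBasis i)) := by
  have := hM.eigenvalues_eq i
  simpa using this

lemma stmt19_rayleigh_upper {n : ℕ} {M : Matrix (Fin n) (Fin n) ℝ} (hM : M.IsHermitian)
    (lam : ℝ) (hlam : ∀ i, hM.eigenvalues i ≤ lam) (x : Fin n → ℝ) :
    x ⬝ᵥ (M *ᵥ x) ≤ lam * (x ⬝ᵥ x) := by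
  have hD : (RCLike.ofReal ∘ hM.eigenvalues : Fin n → ℝ) = hM.eigenvalues := by
    funext i; simp
  have hstar : star (hM.eigenvectorUnitary : Matrix (Fin n) (Fin n) ℝ)
      = (hM.eigenvectorUnitary : Matrix (Fin n) (Fin n) ℝ)ᵀ := by
    ext i j; simp [Matrix.star_apply]
  obtain ⟨U, hspec, hUU⟩ : ∃ U : Matrix (Fin n) (Fin n) ℝ,
      M = U * diagonal hM.eigenvalues * Uᵀ ∧ U * Uᵀ = 1 := by
    refine ⟨(hM.eigenvectorUnitary : Matrix (Fin n) (Fin n) ℝ), ?_, ?_⟩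
    · conv_lhs => rw [hM.spectral_theorem]
      rw [Unitary.conjStarAlgAut_apply, hD, hstar]
    · rw [← hstar]; exact (Matrix.mem_unitaryGroup_iff).mp hM.eigenvectorUnitary.2
  have key : x ⬝ᵥ (M *ᵥ x) = (Uᵀ *ᵥ x) ⬝ᵥ (diagonal hM.eigenvalues *ᵥ (Uᵀ *ᵥ x)) := by
    conv_lhs => rw [hspec]
    rw [← Matrix.mulVec_mulVec, ← Matrix.mulVec_mulVec,
      Matrix.dotProduct_mulVec x U, ← Matrix.mulVec_transpose]
  have hyy : (Uᵀ *ᵥ x) ⬝ᵥ (Uᵀ *ᵥ x) = x ⬝ᵥ x := by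
    rw [Matrix.dotProduct_mulVec, Matrix.vecMul_transpose, Matrix.mulVec_mulVec, hUU,
      Matrix.one_mulVec]
  rw [key, ← hyy]
  set y := Uᵀ *ᵥ x with hy
  have h1 : y ⬝ᵥ (diagonal hM.eigenvalues *ᵥ y) = ∑ i, hM.eigenvalues i * (y i * y i) := by
    simp only [dotProduct, Matrix.mulVec_diagonal]
    exact Finset.sum_congr rfl fun i _ => by ring
  rw [h1, dotProduct, Finset.mul_sum]
  exact Finset.sum_le_sum fun i _ => by nlinarith [hlam i, mul_self_nonneg (y i)]

lemma stmt19_max_eigen {n : ℕ} (hn : 0 < n) {M : Matrix (Fin n) (Fin n) ℝ} (hM : M.IsHermitian)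
    (f : Fin n → ℝ) (hfa : Antitone f) (e : Equiv.Perm (Fin n)) (hf : f = hM.eigenvalues ∘ e) :
    (∀ x : Fin n → ℝ, x ⬝ᵥ (M *ᵥ x) ≤ f ⟨0, hn⟩ * (x ⬝ᵥ x)) ∧
    (∃ y : Fin n → ℝ, y ⬝ᵥ y = 1 ∧ y ⬝ᵥ (M *ᵥ y) = f ⟨0, hn⟩) := by
  have hub : ∀ i, hM.eigenvalues i ≤ f ⟨0, hn⟩ := by
    intro i
    have h0 : (⟨0, hn⟩ : Fin n) ≤ e.symm i := by simp [Fin.le_def]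
    have h1 := hfa h0
    rw [hf] at h1 ⊢
    simpa using h1
  refine ⟨fun x => stmt19_rayleigh_upper hM _ hub x, ⟨hM.eigenvectorBasis (e ⟨0, hn⟩),
    stmt19_dot_self_eigenvectorBasis hM _, ?_⟩⟩
  have h2 := stmt19_eigenvalue_eq_dot hM (e ⟨0, hn⟩)
  have h3 : f ⟨0, hn⟩ = hM.eigenvalues (e ⟨0, hn⟩) := by rw [hf]; simp
  rw [h3]
  exact h2.symm

lemma stmt19_two_point_sum {α : Type*} [Fintype α] [DecidableEq α] {v u : α} (hvu : v ≠ u)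
    (f : α → ℝ) (hf : ∀ p, p ≠ v → p ≠ u → f p = 0) : ∑ p, f p = f v + f u := by
  rw [← Finset.sum_subset (Finset.subset_univ ({v, u} : Finset α))
    (fun x _ hx => hf x (fun h => hx (by simp [h])) (fun h => hx (by simp [h])))]
  exact Finset.sum_pair hvu

lemma stmt19_color_sum {n χ : ℕ} (c : Fin n → Fin χ) (x : Fin n → ℝ) (u v : Fin n) :
    ∑ i : Fin χ, ∑ j : Fin χ,
      (x u * ((if c u = i then (1:ℝ) else 0) - if c u = j then 1 else 0))
        * (x v * ((if c v = i then (1:ℝ) else 0) - if c v = j then 1 else 0))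
    = x u * x v * (2 * χ * (if c u = c v then 1 else 0) - 2) := by
  have ha : ∑ i : Fin χ, (if c u = i then (1:ℝ) else 0) = 1 := by simp
  have hb : ∑ i : Fin χ, (if c v = i then (1:ℝ) else 0) = 1 := by simp
  have hs : ∑ i : Fin χ, (if c u = i then (1:ℝ) else 0) * (if c v = i then (1:ℝ) else 0)
      = (if c u = c v then 1 else 0) := by
    simp_rw [ite_mul, one_mul, zero_mul]
    rw [Finset.sum_ite_eq]
    simp [eq_comm]
  have key : ∀ i : Fin χ, ∑ j : Fin χ,
      ((if c u = i then (1:ℝ) else 0) - if c u = j then 1 else 0)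
        * ((if c v = i then (1:ℝ) else 0) - if c v = j then 1 else 0)
      = χ * ((if c u = i then (1:ℝ) else 0) * (if c v = i then 1 else 0))
        - (if c u = i then (1:ℝ) else 0) - (if c v = i then (1:ℝ) else 0)
        + (if c u = c v then 1 else 0) := by
    intro i
    rw [Finset.sum_congr rfl fun j _ => (by ring :
      ((if c u = i then (1:ℝ) else 0) - if c u = j then 1 else 0)
        * ((if c v = i then (1:ℝ) else 0) - if c v = j then 1 else 0)
      = (if c u = i then (1:ℝ) else 0) * (if c v = i then 1 else 0)
        - (if c u = i then (1:ℝ) else 0) * (if c v = j then 1 else 0)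
        - (if c v = i then (1:ℝ) else 0) * (if c u = j then 1 else 0)
        + (if c u = j then (1:ℝ) else 0) * (if c v = j then 1 else 0))]
    rw [Finset.sum_add_distrib, Finset.sum_sub_distrib, Finset.sum_sub_distrib,
      Finset.sum_const, ← Finset.mul_sum, ← Finset.mul_sum, ha, hb, hs, card_univ]
    simp [mul_comm]
  have expand : ∀ i j : Fin χ,
      (x u * ((if c u = i then (1:ℝ) else 0) - if c u = j then 1 else 0))
        * (x v * ((if c v = i then (1:ℝ) else 0) - if c v = j then 1 else 0))
      = (x u * x v) * (((if c u = i then (1:ℝ) else 0) - if c u = j then 1 else 0)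
        * ((if c v = i then (1:ℝ) else 0) - if c v = j then 1 else 0)) := by
    intro i j; ring
  simp_rw [expand]
  rw [Finset.sum_congr rfl fun i _ => by rw [← Finset.mul_sum]]
  rw [← Finset.mul_sum]
  congr 1
  rw [Finset.sum_congr rfl fun i _ => by rw [key i]]
  rw [Finset.sum_add_distrib, Finset.sum_sub_distrib, Finset.sum_sub_distrib,
    ← Finset.mul_sum, ha, hb, hs, Finset.sum_const, card_univ]
  simp
  split <;> ring

variable {n : ℕ} (G : SimpleGraph (Fin n)) [DecidableRel G.Adj]

lemma stmt19_qL_eq (x : Fin n → ℝ) :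
    x ⬝ᵥ (G.lapMatrix ℝ *ᵥ x)
      = (∑ i, (G.degree i : ℝ) * x i * x i) - ∑ i, ∑ j, (if G.Adj i j then x i * x j else 0) := by
  rw [SimpleGraph.lapMatrix, Matrix.sub_mulVec, dotProduct_sub,
    SimpleGraph.dotProduct_mulVec_degMatrix, SimpleGraph.dotProduct_mulVec_adjMatrix]

lemma stmt19_qQ_eq (x : Fin n → ℝ) :
    x ⬝ᵥ ((G.degMatrix ℝ + G.adjMatrix ℝ) *ᵥ x)
      = (∑ i, (G.degree i : ℝ) * x i * x i) + ∑ i, ∑ j, (if G.Adj i j then x i * x j else 0) := by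
  rw [Matrix.add_mulVec, dotProduct_add,
    SimpleGraph.dotProduct_mulVec_degMatrix, SimpleGraph.dotProduct_mulVec_adjMatrix]

lemma stmt19_qa_le_qd (x : Fin n → ℝ) :
    (∑ i, ∑ j, (if G.Adj i j then x i * x j else 0)) ≤ ∑ i, (G.degree i : ℝ) * x i * x i := by
  have h : 0 ≤ x ⬝ᵥ (G.lapMatrix ℝ *ᵥ x) := by
    have := (SimpleGraph.posSemidef_lapMatrix ℝ G).dotProduct_mulVec_nonneg x
    simpa using this
  rw [stmt19_qL_eq] at h
  linarith

lemma stmt19_qL_le_n (x : Fin n → ℝ) :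
    x ⬝ᵥ (G.lapMatrix ℝ *ᵥ x) ≤ (n : ℝ) * (x ⬝ᵥ x) := by
  have h1 : x ⬝ᵥ (G.lapMatrix ℝ *ᵥ x)
      = (∑ i, ∑ j, if G.Adj i j then (x i - x j) ^ 2 else 0) / 2 := by
    rw [← SimpleGraph.lapMatrix_toLinearMap₂', Matrix.toLinearMap₂'_apply']
  have h2 : (∑ i, ∑ j, if G.Adj i j then (x i - x j) ^ 2 else 0)
      ≤ ∑ i : Fin n, ∑ j : Fin n, (x i - x j) ^ 2 := by
    refine Finset.sum_le_sum fun i _ => Finset.sum_le_sum fun j _ => ?_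
    split
    · exact le_refl _
    · positivity
  have h3 : ∑ i : Fin n, ∑ j : Fin n, (x i - x j) ^ 2
      = 2 * n * (x ⬝ᵥ x) - 2 * (∑ i, x i) ^ 2 := by
    have h4 : ∀ i, ∑ j : Fin n, (x i - x j) ^ 2
        = (n : ℝ) * (x i)^2 - 2 * x i * (∑ j, x j) + (∑ j, (x j)^2) := by
      intro i
      rw [Finset.sum_congr rfl fun j _ => (by ring :
        (x i - x j) ^ 2 = (x i)^2 - 2 * x i * x j + (x j)^2)]
      rw [Finset.sum_add_distrib, Finset.sum_sub_distrib, Finset.sum_const, ← Finset.mul_sum]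
      simp [card_univ]
    rw [Finset.sum_congr rfl fun i _ => h4 i]
    rw [Finset.sum_add_distrib, Finset.sum_sub_distrib, ← Finset.sum_mul, ← Finset.mul_sum,
      Finset.sum_const, card_univ]
    have hdot : x ⬝ᵥ x = ∑ i, (x i)^2 := by
      simp [dotProduct, sq]
    rw [hdot]
    simp only [Fintype.card_fin, nsmul_eq_mul, Finset.sum_mul]
    rw [Finset.sum_congr rfl fun i _ => mul_assoc 2 (x i) _, ← Finset.mul_sum, ← Finset.sum_mul]
    ring
  have hsq : 0 ≤ (∑ i, x i)^2 := sq_nonneg _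
  rw [h1]
  nlinarith [h2, h3]

lemma stmt19_maxdeg_lt_t {v u : Fin n} (h : G.Adj v u) (t : ℝ)
    (hray : ∀ x : Fin n → ℝ, x ⬝ᵥ (G.lapMatrix ℝ *ᵥ x) ≤ t * (x ⬝ᵥ x)) :
    (G.degree v : ℝ) < t := by
  classical
  set Δ : ℝ := (G.degree v : ℝ) with hΔdef
  have hΔ1 : (1 : ℝ) ≤ Δ := by
    have h0 : 0 < G.degree v := by
      rw [G.degree_pos_iff_exists_adj]; exact ⟨u, h⟩
    have h1 : 1 ≤ G.degree v := h0
    rw [hΔdef]; exact_mod_cast h1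
  have hΔ0 : (0:ℝ) < Δ := by linarith
  set ε : ℝ := 1 / Δ with hε
  have hε0 : 0 < ε := by positivity
  have hεΔ : ε * Δ = 1 := by rw [hε]; field_simp
  have huv : u ≠ v := (G.ne_of_adj h).symm
  have hvu : v ≠ u := G.ne_of_adj h
  set z : Fin n → ℝ := fun p => if p = v then (1:ℝ) else if p = u then -ε else 0 with hz
  have hzv : z v = 1 := by rw [hz]; simp
  have hzu : z u = -ε := by rw [hz]; simp [huv]
  have hz0 : ∀ p, p ≠ v → p ≠ u → z p = 0 := by intro p h1 h2; rw [hz]; simp [h1, h2]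
  have hdot : z ⬝ᵥ z = 1 + ε * ε := by
    rw [dotProduct, stmt19_two_point_sum hvu _ (fun p h1 h2 => by rw [hz0 p h1 h2]; ring)]
    rw [hzv, hzu]; ring
  have hqd : (∑ i, (G.degree i : ℝ) * z i * z i) = Δ + (G.degree u : ℝ) * ε * ε := by
    rw [stmt19_two_point_sum hvu _ (fun p h1 h2 => by rw [hz0 p h1 h2]; ring)]
    rw [hzv, hzu]; ring
  have hqa : (∑ i, ∑ j, (if G.Adj i j then z i * z j else 0)) = -(2 * ε) := by
    rw [stmt19_two_point_sum hvu _ (fun p h1 h2 => Finset.sum_eq_zero fun q _ => by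
      rw [hz0 p h1 h2]; simp)]
    rw [stmt19_two_point_sum hvu (fun q => if G.Adj v q then z v * z q else 0)
      (fun q h1 h2 => by simp only [hz0 q h1 h2, mul_zero, ite_self]),
      stmt19_two_point_sum hvu (fun q => if G.Adj u q then z u * z q else 0)
      (fun q h1 h2 => by simp only [hz0 q h1 h2, mul_zero, ite_self])]
    rw [if_neg (G.irrefl), if_pos h, if_pos h.symm, if_neg (G.irrefl)]
    rw [hzv, hzu]; ring
  have hb := hray z
  rw [stmt19_qL_eq G, hdot, hqd, hqa] at hb
  have hdu : (0:ℝ) ≤ (G.degree u : ℝ) := by positivity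
  nlinarith [hb, hεΔ, hε0, hdu, sq_nonneg ε]

lemma stmt19_main_color {χ : ℕ} (c : Fin n → Fin χ) (hc : ∀ u v, G.Adj u v → c u ≠ c v)
    (y : Fin n → ℝ) (t : ℝ)
    (hray : ∀ x : Fin n → ℝ, x ⬝ᵥ (G.lapMatrix ℝ *ᵥ x) ≤ t * (x ⬝ᵥ x))
    (hy1 : y ⬝ᵥ y = 1) (hχ : 2 ≤ χ) :
    (χ : ℝ) * ((∑ i, (G.degree i : ℝ) * y i * y i)
        + ∑ i, ∑ j, (if G.Adj i j then y i * y j else 0))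
      ≤ 2 * ((χ : ℝ) - 1) * t := by
  classical
  set w : Fin χ → Fin χ → Fin n → ℝ :=
    fun i j u => y u * ((if c u = i then (1:ℝ) else 0) - if c u = j then 1 else 0) with hw
  have hww : ∀ u v : Fin n, ∑ i : Fin χ, ∑ j : Fin χ, w i j u * w i j v
      = y u * y v * (2 * χ * (if c u = c v then 1 else 0) - 2) := by
    intro u v; exact stmt19_color_sum c y u v
  have hnorm : ∑ i : Fin χ, ∑ j : Fin χ, (w i j ⬝ᵥ w i j) = 2 * (χ : ℝ) - 2 := by
    have h1 : ∀ i j, w i j ⬝ᵥ w i j = ∑ u, w i j u * w i j u := fun i j => rfl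
    simp_rw [h1]
    rw [Finset.sum_congr rfl fun i (_ : i ∈ univ) => Finset.sum_comm, Finset.sum_comm]
    rw [Finset.sum_congr rfl fun u (_ : u ∈ univ) => hww u u]
    simp only [if_pos rfl, if_true, mul_one]
    have h2 : ∑ u, y u * y u * (2 * (χ:ℝ) - 2) = (y ⬝ᵥ y) * (2 * (χ:ℝ) - 2) := by
      rw [dotProduct, Finset.sum_mul]
    rw [h2, hy1, one_mul]
  have hdeg : ∑ i : Fin χ, ∑ j : Fin χ, (∑ u, (G.degree u : ℝ) * w i j u * w i j u)
      = (2 * (χ : ℝ) - 2) * ∑ u, (G.degree u : ℝ) * y u * y u := by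
    rw [Finset.sum_congr rfl fun i (_ : i ∈ univ) => Finset.sum_comm, Finset.sum_comm]
    rw [Finset.sum_congr rfl fun u (_ : u ∈ univ) => (by
      simp_rw [mul_assoc, ← Finset.mul_sum]
      rw [hww u u]
      simp only [if_pos rfl, if_true, mul_one]
      ring :
      (∑ i : Fin χ, ∑ j : Fin χ, (G.degree u : ℝ) * w i j u * w i j u)
        = (2 * (χ:ℝ) - 2) * ((G.degree u : ℝ) * y u * y u))]
    rw [← Finset.mul_sum]
  have hadj : ∑ i : Fin χ, ∑ j : Fin χ,
        (∑ u, ∑ v, (if G.Adj u v then w i j u * w i j v else 0))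
      = -2 * ∑ u, ∑ v, (if G.Adj u v then y u * y v else 0) := by
    rw [Finset.sum_congr rfl fun i (_ : i ∈ univ) => Finset.sum_comm, Finset.sum_comm]
    rw [Finset.sum_congr rfl fun u (_ : u ∈ univ) => (Finset.sum_congr rfl
      fun i (_ : i ∈ univ) => Finset.sum_comm), Finset.sum_congr rfl
      fun u (_ : u ∈ univ) => Finset.sum_comm]
    rw [Finset.mul_sum]
    refine Finset.sum_congr rfl fun u _ => ?_
    rw [Finset.mul_sum]
    refine Finset.sum_congr rfl fun v _ => ?_
    by_cases h : G.Adj u v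
    · simp only [if_pos h]
      rw [hww u v, if_neg (hc u v h)]
      ring
    · simp [h]
  have hsum : ∑ i : Fin χ, ∑ j : Fin χ, (w i j ⬝ᵥ (G.lapMatrix ℝ *ᵥ w i j))
      ≤ t * (2 * (χ : ℝ) - 2) := by
    calc ∑ i : Fin χ, ∑ j : Fin χ, (w i j ⬝ᵥ (G.lapMatrix ℝ *ᵥ w i j))
        ≤ ∑ i : Fin χ, ∑ j : Fin χ, t * (w i j ⬝ᵥ w i j) :=
          Finset.sum_le_sum fun i _ => Finset.sum_le_sum fun j _ => hray _
      _ = t * ∑ i : Fin χ, ∑ j : Fin χ, (w i j ⬝ᵥ w i j) := by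
          simp_rw [← Finset.mul_sum]
      _ = t * (2 * (χ : ℝ) - 2) := by rw [hnorm]
  have hqL : ∑ i : Fin χ, ∑ j : Fin χ, (w i j ⬝ᵥ (G.lapMatrix ℝ *ᵥ w i j))
      = (2 * (χ : ℝ) - 2) * (∑ u, (G.degree u : ℝ) * y u * y u)
        + 2 * ∑ u, ∑ v, (if G.Adj u v then y u * y v else 0) := by
    simp_rw [stmt19_qL_eq G]
    rw [Finset.sum_congr rfl fun i (_ : i ∈ univ) => Finset.sum_sub_distrib _ _,
      Finset.sum_sub_distrib, hdeg, hadj]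
    ring
  have hql := hqL ▸ hsum
  have hqaqd := stmt19_qa_le_qd G y
  have hχR : (2 : ℝ) ≤ (χ : ℝ) := by exact_mod_cast hχ
  nlinarith [hql, hqaqd, hχR]

end Stmt19Aux

set_option maxHeartbeats 1000000 in
/-- For a finite simple graph `G` on `n` vertices with at least one edge and chromatic number
`χ`: `δ_1 ≤ (χ - 1)·(2θ_1 - δ_1)`; equivalently `χ ≥ 1 + δ_1/(2θ_1 - δ_1)`.  Moreover the
chain of inequalities
`1 + μ_1/(μ_1 - δ_1 + θ_1) ≥ 1 + δ_1/(2θ_1 - δ_1) ≥ 1 + δ_1/(2n - δ_1) ≥ 1 + μ_1/(n - μ_1)`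
holds.  Here `μ`, `θ`, `δ` are the non-increasing enumerations of the eigenvalues of the
adjacency matrix, the Laplacian `L = D - A` and the signless Laplacian `Q = D + A`. -/
theorem stmt_19 {n : ℕ} (hn : 0 < n) (G : SimpleGraph (Fin n)) [DecidableRel G.Adj]
    (he : ∃ v w : Fin n, G.Adj v w)
    (χ : ℕ) (hχ : G.chromaticNumber = (χ : ℕ∞))
    (hA : (G.adjMatrix ℝ).IsHermitian)
    (hL : (G.lapMatrix ℝ).IsHermitian)
    (hQ : (G.degMatrix ℝ + G.adjMatrix ℝ).IsHermitian)
    (μ θ δ : Fin n → ℝ)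
    (hμa : Antitone μ) (hμ : ∃ e : Equiv.Perm (Fin n), μ = hA.eigenvalues ∘ e)
    (hθa : Antitone θ) (hθ : ∃ e : Equiv.Perm (Fin n), θ = hL.eigenvalues ∘ e)
    (hδa : Antitone δ) (hδ : ∃ e : Equiv.Perm (Fin n), δ = hQ.eigenvalues ∘ e) :
    δ ⟨0, hn⟩ ≤ ((χ : ℝ) - 1) * (2 * θ ⟨0, hn⟩ - δ ⟨0, hn⟩) ∧
    (χ : ℝ) ≥ 1 + δ ⟨0, hn⟩ / (2 * θ ⟨0, hn⟩ - δ ⟨0, hn⟩) ∧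
    1 + μ ⟨0, hn⟩ / (μ ⟨0, hn⟩ - δ ⟨0, hn⟩ + θ ⟨0, hn⟩) ≥
      1 + δ ⟨0, hn⟩ / (2 * θ ⟨0, hn⟩ - δ ⟨0, hn⟩) ∧
    1 + δ ⟨0, hn⟩ / (2 * θ ⟨0, hn⟩ - δ ⟨0, hn⟩) ≥
      1 + δ ⟨0, hn⟩ / (2 * (n : ℝ) - δ ⟨0, hn⟩) ∧
    1 + δ ⟨0, hn⟩ / (2 * (n : ℝ) - δ ⟨0, hn⟩) ≥
      1 + μ ⟨0, hn⟩ / ((n : ℝ) - μ ⟨0, hn⟩) := by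
  classical
  obtain ⟨v0, w0, hvw⟩ := he
  -- a proper coloring with χ colors
  have hcol : G.Colorable χ := by
    rw [← SimpleGraph.chromaticNumber_le_iff_colorable, hχ]
  obtain ⟨C⟩ := hcol
  have hc : ∀ u v, G.Adj u v → C u ≠ C v := fun u v h => C.valid h
  have hχ2 : 2 ≤ χ := by
    have h1 : 1 < Fintype.card (Fin χ) :=
      Fintype.one_lt_card_iff_nontrivial.2 ⟨⟨C v0, C w0, hc v0 w0 hvw⟩⟩
    simp at h1; omega
  have hχ2R : (2 : ℝ) ≤ (χ : ℝ) := by exact_mod_cast hχ2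
  -- eigen data
  obtain ⟨eA, heA⟩ := hμ
  obtain ⟨eL, heL⟩ := hθ
  obtain ⟨eQ, heQ⟩ := hδ
  obtain ⟨hrayA, yA, hyA1, hyAv⟩ := stmt19_max_eigen hn hA μ hμa eA heA
  obtain ⟨hrayL, yL, hyL1, hyLv⟩ := stmt19_max_eigen hn hL θ hθa eL heL
  obtain ⟨hrayQ, yQ, hyQ1, hyQv⟩ := stmt19_max_eigen hn hQ δ hδa eQ heQ
  set a := μ ⟨0, hn⟩ with hadef
  set t := θ ⟨0, hn⟩ with htdef
  set d := δ ⟨0, hn⟩ with hddef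
  clear_value a t d
  -- quadratic form values
  have hQval : (∑ i, (G.degree i : ℝ) * yQ i * yQ i)
      + (∑ i, ∑ j, (if G.Adj i j then yQ i * yQ j else 0)) = d := by
    rw [← stmt19_qQ_eq]; exact hyQv
  have hLval : (∑ i, (G.degree i : ℝ) * yL i * yL i)
      - (∑ i, ∑ j, (if G.Adj i j then yL i * yL j else 0)) = t := by
    rw [← stmt19_qL_eq]; exact hyLv
  have hAval : (∑ i, ∑ j, (if G.Adj i j then yA i * yA j else 0)) = a := by
    rw [← SimpleGraph.dotProduct_mulVec_adjMatrix]; exact hyAv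
  -- max degree vertex
  obtain ⟨vm, -, hvm⟩ := Finset.exists_max_image univ (fun v => G.degree v) ⟨v0, mem_univ v0⟩
  have hΔv0 : G.degree v0 ≤ G.degree vm := hvm v0 (mem_univ _)
  have hdegpos : 0 < G.degree v0 := by
    rw [G.degree_pos_iff_exists_adj]; exact ⟨w0, hvw⟩
  obtain ⟨um, hum⟩ := (G.degree_pos_iff_exists_adj vm).1 (lt_of_lt_of_le hdegpos hΔv0)
  set Δ : ℝ := (G.degree vm : ℝ) with hΔdef
  have hΔt : Δ < t := stmt19_maxdeg_lt_t G hum t hrayL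
  have hΔ1 : (1 : ℝ) ≤ Δ := by
    have h1 : 1 ≤ G.degree vm := lt_of_lt_of_le hdegpos hΔv0
    rw [hΔdef]; exact_mod_cast h1
  have hΔn : Δ + 1 ≤ (n : ℝ) := by
    have h1 : G.degree vm < n := by
      have := G.degree_lt_card_verts vm
      simpa using this
    rw [hΔdef]; exact_mod_cast h1
  have hqd_le : ∀ x : Fin n → ℝ, (∑ i, (G.degree i : ℝ) * x i * x i) ≤ Δ * (x ⬝ᵥ x) := by
    intro x
    rw [dotProduct, Finset.mul_sum]
    refine Finset.sum_le_sum fun i _ => ?_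
    have h1 : (G.degree i : ℝ) ≤ Δ := by
      rw [hΔdef]; exact_mod_cast hvm i (mem_univ i)
    nlinarith [mul_self_nonneg (x i)]
  -- abs helpers
  have habs_dot : ∀ x : Fin n → ℝ, (fun i => |x i|) ⬝ᵥ (fun i => |x i|) = x ⬝ᵥ x := by
    intro x; simp [dotProduct, abs_mul_abs_self]
  have habs_qd : ∀ x : Fin n → ℝ,
      (∑ i, (G.degree i : ℝ) * |x i| * |x i|) = ∑ i, (G.degree i : ℝ) * x i * x i := by
    intro x
    exact Finset.sum_congr rfl fun i _ => by rw [mul_assoc, mul_assoc, abs_mul_abs_self]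
  have habs_qa_ge : ∀ x : Fin n → ℝ,
      (∑ i, ∑ j, (if G.Adj i j then x i * x j else 0))
        ≤ ∑ i, ∑ j, (if G.Adj i j then |x i| * |x j| else 0) := by
    intro x
    refine Finset.sum_le_sum fun i _ => Finset.sum_le_sum fun j _ => ?_
    split
    · rw [← abs_mul]; exact le_abs_self _
    · exact le_refl _
  have habs_qa_ge' : ∀ x : Fin n → ℝ,
      -(∑ i, ∑ j, (if G.Adj i j then |x i| * |x j| else 0))
        ≤ ∑ i, ∑ j, (if G.Adj i j then x i * x j else 0) := by
    intro x
    rw [← Finset.sum_neg_distrib]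
    refine Finset.sum_le_sum fun i _ => ?_
    rw [← Finset.sum_neg_distrib]
    refine Finset.sum_le_sum fun j _ => ?_
    split
    · rw [← abs_mul]; exact neg_abs_le _
    · simp
  -- key facts
  have hrayA' : ∀ x : Fin n → ℝ,
      (∑ i, ∑ j, (if G.Adj i j then x i * x j else 0)) ≤ a * (x ⬝ᵥ x) := by
    intro x
    have := hrayA x
    rwa [SimpleGraph.dotProduct_mulVec_adjMatrix] at this
  have f_t_le_n : t ≤ (n : ℝ) := by
    have h1 := stmt19_qL_le_n G yL
    rw [hyLv, hyL1, mul_one] at h1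
    exact h1
  have f_a_le_Δ : a ≤ Δ := by
    have h1 := stmt19_qa_le_qd G yA
    have h2 := hqd_le yA
    rw [hyA1, mul_one] at h2
    linarith [hAval]
  have f_d_le_Δa : d ≤ Δ + a := by
    have h1 := hqd_le yQ
    have h2 := hrayA' yQ
    rw [hyQ1, mul_one] at h1 h2
    linarith [hQval]
  have f_d_le_2Δ : d ≤ 2 * Δ := by
    have h1 := hqd_le yQ
    have h2 := stmt19_qa_le_qd G yQ
    rw [hyQ1, mul_one] at h1
    linarith [hQval]
  have f_2a_le_d : 2 * a ≤ d := by
    have h1 := hrayQ (fun i => |yA i|)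
    rw [stmt19_qQ_eq, habs_dot yA, hyA1, mul_one] at h1
    have h3 := stmt19_qa_le_qd G (fun i => |yA i|)
    rw [habs_qd yA] at h1 h3
    have h2 := habs_qa_ge yA
    rw [hAval] at h2
    linarith [h1, h2, h3]
  have f_t_le_d : t ≤ d := by
    have h1 := hrayQ (fun i => |yL i|)
    rw [stmt19_qQ_eq, habs_dot yL, hyL1, mul_one] at h1
    try simp only [] at h1
    rw [habs_qd yL] at h1
    have h2 := habs_qa_ge' yL
    linarith [h1, h2, hLval]
  have f_main : (χ : ℝ) * d ≤ 2 * ((χ : ℝ) - 1) * t := by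
    have h1 := stmt19_main_color G (⇑C) hc yQ t hrayL hyQ1 hχ2
    rw [hQval] at h1
    exact h1
  -- positivity of denominators
  have ht0 : (0 : ℝ) < t := by linarith
  have hd0 : (0 : ℝ) < d := by linarith
  have h2td : (0 : ℝ) < 2 * t - d := by nlinarith [f_main, ht0, hχ2R]
  have hden2 : (0 : ℝ) < a - d + t := by linarith
  have h2nd : (0 : ℝ) < 2 * (n : ℝ) - d := by linarith
  have hna : (0 : ℝ) < (n : ℝ) - a := by linarith
  have g1 : d ≤ ((χ : ℝ) - 1) * (2 * t - d) := by nlinarith [f_main]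
  refine ⟨g1, ?_, ?_, ?_, ?_⟩
  · have h1 : d / (2 * t - d) ≤ (χ : ℝ) - 1 := (div_le_iff₀ h2td).2 (by linarith [g1])
    rw [ge_iff_le]; linarith
  · rw [ge_iff_le]
    refine add_le_add_right ?_ 1
    rw [div_le_div_iff₀ h2td hden2]
    nlinarith [mul_nonneg (by linarith : (0:ℝ) ≤ d - 2 * a) (by linarith : (0:ℝ) ≤ d - t)]
  · rw [ge_iff_le]
    refine add_le_add_right ?_ 1
    rw [div_le_div_iff₀ h2nd h2td]
    nlinarith [f_t_le_n, hd0]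
  · rw [ge_iff_le]
    refine add_le_add_right ?_ 1
    rw [div_le_div_iff₀ hna h2nd]
    have hn0 : (0 : ℝ) < (n : ℝ) := by exact_mod_cast hn
    nlinarith [f_2a_le_d, hn0]
end
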